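/- arXiv:2510.24609 — 6 statements merged into one kernel-verified Lean document; each statement's English description precedes it below -/
import Mathlib

section
/- Let Y ⊆ X be a φ-minimal set consisting of more than one φ-orbit, and assume there exists a precompact section Ψ ⊆ X for φ such that for every R > 0 the set φ_{(-R,R)}Ψ is open in X, and Y ∩ closure(Ψ) = Y ∩ Ψ ≠ ∅. Then for every y₀ ∈ Y and every R > 0, the Lebesgue measure of the set {t ∈ ℝ : φ t y₀ ∈ φ_{(-R,R)}Ψ} is infinite. -/
open MeasureTheory

noncomputable section

variable {X : Type*} [TopologicalSpace X]

/-- The orbit `{φ t y : t ∈ ℝ}` of a point under a flow. -/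
def flowOrbit (φ : Flow ℝ X) (y : X) : Set X := Set.range fun t : ℝ => φ t y

/-- `φ_I F = {φ t x : t ∈ I, x ∈ F}`. -/
def flowSet (φ : Flow ℝ X) (I : Set ℝ) (F : Set X) : Set X :=
  {y | ∃ t ∈ I, ∃ x ∈ F, y = φ t x}

/-- `Ψ` is a (partial) section for the flow `φ`: for every `x`, the set of times at which
the orbit of `x` visits `Ψ` is a discrete (possibly empty) subset of `ℝ`. -/
def IsFlowSection (φ : Flow ℝ X) (Ψ : Set X) : Prop :=
  ∀ x : X, DiscreteTopology ↥{t : ℝ | φ t x ∈ Ψ}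

/-- A measurable subset of `ℝ` which, arbitrarily far to the right, contains
intervals of a fixed positive length has infinite Lebesgue measure. -/
theorem aux_vol_top {A : Set ℝ} (hA : MeasurableSet A) {R : ℝ} (hR : 0 < R)
    (h : ∀ a : ℝ, ∃ b, a ≤ b ∧ Set.Ioo b (b + R) ⊆ A) : volume A = ⊤ := by
  by_contra hfin
  set s : ℕ → Set ℝ := fun n => A ∩ Set.Ici (n : ℝ) with hs
  have hms : ∀ n, MeasurableSet (s n) := fun n => hA.inter measurableSet_Ici
  have hanti : Antitone s := fun m n hmn =>
    Set.inter_subset_inter_right _ (Set.Ici_subset_Ici.2 (by exact_mod_cast hmn))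
  have hiInt : ⋂ n, s n = ∅ := by
    ext x
    simp only [Set.mem_iInter, Set.mem_empty_iff_false, iff_false, not_forall]
    obtain ⟨n, hn⟩ := exists_nat_gt x
    exact ⟨n, fun hx => absurd hx.2 (not_le.2 hn)⟩
  have hfin' : ∃ n, volume (s n) ≠ ⊤ :=
    ⟨0, fun hc => hfin (top_le_iff.1 (hc ▸ measure_mono Set.inter_subset_left))⟩
  have htd := tendsto_measure_iInter_atTop (fun n => (hms n).nullMeasurableSet) hanti hfin'
  rw [hiInt, measure_empty] at htd
  have hlb : ∀ n : ℕ, ENNReal.ofReal R ≤ volume (s n) := by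
    intro n
    obtain ⟨b, hb, hsub⟩ := h n
    have h1 : Set.Ioo b (b + R) ⊆ s n := fun x hx =>
      ⟨hsub hx, le_of_lt (lt_of_le_of_lt hb hx.1)⟩
    calc ENNReal.ofReal R = volume (Set.Ioo b (b + R)) := by
          rw [Real.volume_Ioo]; congr 1; ring
      _ ≤ volume (s n) := measure_mono h1
  exact (ENNReal.ofReal_pos.2 hR).not_ge
    (ge_of_tendsto htd (Filter.Eventually.of_forall hlb))

/-- Under the hypotheses of the measure-construction proposition, the orbit of any point of
`Y` spends an infinite amount of time in `B_R = φ_{(-R,R)}Ψ`. -/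
theorem volume_time_in_flowSet_eq_top
    [LocallyCompactSpace X] [SecondCountableTopology X] [T2Space X]
    (φ : Flow ℝ X) (Y : Set X) (hYne : Y.Nonempty) (hYcl : IsClosed Y)
    (hmin : ∀ y ∈ Y, closure (flowOrbit φ y) = Y)
    (hmulti : ∃ y ∈ Y, ∃ y' ∈ Y, y' ∉ flowOrbit φ y)
    (Ψ : Set X) (hΨpre : IsCompact (closure Ψ)) (hΨsec : IsFlowSection φ Ψ)
    (hopen : ∀ R : ℝ, 0 < R → IsOpen (flowSet φ (Set.Ioo (-R) R) Ψ))
    (hcap : Y ∩ closure Ψ = Y ∩ Ψ) (hne : (Y ∩ Ψ).Nonempty)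
    (y₀ : X) (hy₀ : y₀ ∈ Y) (R : ℝ) (hR : 0 < R) :
    volume {t : ℝ | φ t y₀ ∈ flowSet φ (Set.Ioo (-R) R) Ψ} = ⊤ := by
  set B := flowSet φ (Set.Ioo (-R) R) Ψ with hB
  set T := {t : ℝ | φ t y₀ ∈ B} with hT
  have hBopen : IsOpen B := hopen R hR
  have hcont : Continuous fun t : ℝ => φ t y₀ := φ.continuous continuous_id continuous_const
  have hTopen : IsOpen T := hBopen.preimage hcont
  have hTm : MeasurableSet T := hTopen.measurableSet
  -- every element of Ψ is in B
  have hΨB : ∀ x ∈ Ψ, x ∈ B := fun x hx =>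
    ⟨0, ⟨neg_lt_zero.2 hR, hR⟩, x, hx, (φ.map_zero_apply x).symm⟩
  -- each point of T sits in an interval of length 2R inside T
  have hInt : ∀ t ∈ T, ∃ b, b < t ∧ t < b + 2 * R ∧ Set.Ioo b (b + 2 * R) ⊆ T := by
    intro t ht
    obtain ⟨s, hs, x, hx, he⟩ := ht
    have he' : φ t y₀ = φ s x := he
    have hts : φ (t - s) y₀ = x := by
      have h5 : φ (-s) (φ t y₀) = φ (-s) (φ s x) := by rw [he']
      rwa [← φ.map_add, ← φ.map_add, neg_add_cancel, φ.map_zero_apply,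
        show -s + t = t - s by ring] at h5
    refine ⟨t - s - R, by linarith [hs.1, hs.2], by linarith [hs.1, hs.2], ?_⟩
    intro u hu
    simp only [Set.mem_Ioo] at hu
    refine ⟨u - (t - s), ⟨by linarith, by linarith⟩, x, hx, ?_⟩
    show φ u y₀ = φ (u - (t - s)) x
    rw [← hts, ← φ.map_add]
    congr 1
    ring
  -- if T were bounded, Y would be a single orbit
  have hbdd : ∀ m M : ℝ, ¬ (T ⊆ Set.Icc m M) := by
    intro m M hbd
    set C := (fun t : ℝ => φ t y₀) '' Set.Icc m M with hC
    have hCcomp : IsCompact C := isCompact_Icc.image hcont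
    have hCcl : IsClosed C := hCcomp.isClosed
    have hKC : Y ∩ Ψ ⊆ C := by
      intro p hp
      have h1 : p ∈ closure (flowOrbit φ y₀) := by rw [hmin y₀ hy₀]; exact hp.1
      have h3 : p ∈ closure (B ∩ flowOrbit φ y₀) :=
        hBopen.inter_closure ⟨hΨB p hp.2, h1⟩
      have h4 : B ∩ flowOrbit φ y₀ ⊆ C := by
        rintro q ⟨hq, t, rfl⟩
        exact ⟨t, hbd hq, rfl⟩
      exact closure_minimal h4 hCcl h3
    have horb : ∀ q ∈ Y, q ∈ flowOrbit φ y₀ := by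
      intro q hq
      obtain ⟨p, hp⟩ := hne
      have hpcl : p ∈ closure (flowOrbit φ q) := by rw [hmin q hq]; exact hp.1
      obtain ⟨z, hzB, hzO⟩ :=
        (_root_.mem_closure_iff.1 hpcl) B hBopen (hΨB p hp.2)
      obtain ⟨t, rfl⟩ := hzO
      obtain ⟨s, hs, x, hx, he⟩ := hzB
      have he' : φ t q = φ s x := he
      have hxq : φ (t - s) q = x := by
        have h5 : φ (-s) (φ t q) = φ (-s) (φ s x) := by rw [he']
        rwa [← φ.map_add, ← φ.map_add, neg_add_cancel, φ.map_zero_apply,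
          show -s + t = t - s by ring] at h5
      have hxY : x ∈ Y := by
        rw [← hmin q hq]
        exact subset_closure (hxq ▸ ⟨t - s, rfl⟩)
      obtain ⟨u, _, hux⟩ := hKC ⟨hxY, hx⟩
      have hux' : φ u y₀ = x := hux
      refine ⟨s - t + u, ?_⟩
      have h6 : φ (s - t) (φ (t - s) q) = q := by
        rw [← φ.map_add, show s - t + (t - s) = 0 by ring, φ.map_zero_apply]
      show φ (s - t + u) y₀ = q
      rw [φ.map_add, hux', ← hxq, h6]
    obtain ⟨y, hy, y', hy', hnmem⟩ := hmulti
    obtain ⟨a, rfl⟩ := horb y hy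
    obtain ⟨c, hc⟩ := horb y' hy'
    have hc' : φ c y₀ = y' := hc
    refine hnmem ⟨c - a, ?_⟩
    show φ (c - a) (φ a y₀) = y'
    rw [← φ.map_add, sub_add_cancel]
    exact hc'
  -- T is unbounded above or below
  by_cases h1 : ∀ a : ℝ, ∃ t ∈ T, a < t
  · -- unbounded above
    refine aux_vol_top hTm (by linarith : (0:ℝ) < 2 * R) fun a => ?_
    obtain ⟨t, ht, hat⟩ := h1 (a + 2 * R)
    obtain ⟨b, hb1, hb2, hsub⟩ := hInt t ht
    exact ⟨b, by linarith, hsub⟩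
  · by_cases h2 : ∀ a : ℝ, ∃ t ∈ T, t < a
    · -- unbounded below: reflect
      have hneg : volume ((fun x : ℝ => -x) ⁻¹' T) = volume T :=
        (Measure.measurePreserving_neg (volume : Measure ℝ)).measure_preimage
          hTm.nullMeasurableSet
      rw [← hneg]
      refine aux_vol_top (hTm.preimage measurable_neg) (by linarith : (0:ℝ) < 2 * R) fun a => ?_
      obtain ⟨t, ht, hat⟩ := h2 (-(a + 2 * R))
      obtain ⟨b, hb1, hb2, hsub⟩ := hInt t ht
      refine ⟨-(b + 2 * R), by linarith, fun x hx => ?_⟩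
      have : -x ∈ Set.Ioo b (b + 2 * R) := by
        simp only [Set.mem_Ioo] at hx ⊢
        constructor <;> linarith [hx.1, hx.2]
      exact hsub this
    · -- bounded: contradiction
      push_neg at h1 h2
      obtain ⟨M, hM⟩ := h1
      obtain ⟨m, hm⟩ := h2
      exact absurd (fun t ht => Set.mem_Icc.2 ⟨hm t ht, hM t ht⟩) (hbdd m M)
end
end

section
/- Let Y ⊆ X be a φ-minimal set consisting of more than one φ-orbit, with Y not compact, and assume there exists a precompact section Ψ ⊆ X for φ such that for every R > 0 the set B_R := φ_{(-R,R)}Ψ is open in X, and Y ∩ closure(Ψ) = Y ∩ Ψ ≠ ∅. Fix y₀ ∈ Y and R > 0. Then for every ε ∈ (0,1) there exist a compact set K ⊆ B_R and T₀ > 0 such that for all T ≥ T₀: vol {t ∈ [-T,T] : φ t y₀ ∈ K} ≥ (1 - ε) · vol {t ∈ [-T,T] : φ t y₀ ∈ B_R}, where vol denotes Lebesgue measure on ℝ. (Asymptotic tightness of the statistical measures along the orbit of y₀.) -/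
open MeasureTheory

noncomputable section

variable {X : Type*} [TopologicalSpace X]

/-- Measure of the union of intervals of radius `r` around an inserted maximal point. -/
lemma vol_biUnion_insert_max (r : ℝ) (hr : 0 < r) (m : ℝ) (s : Finset ℝ)
    (hm : ∀ x ∈ s, x < m) :
    volume (⋃ u ∈ insert m s, Set.Ioo (u - r) (u + r)) =
      volume (⋃ u ∈ s, Set.Ioo (u - r) (u + r)) +
        (if h : s.Nonempty then ENNReal.ofReal (min (2 * r) (m - s.max' h))
          else ENNReal.ofReal (2 * r)) := by
  classical
  set A : Set ℝ := ⋃ u ∈ s, Set.Ioo (u - r) (u + r) with hA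
  have hAmeas : MeasurableSet A := (isOpen_biUnion fun _ _ => isOpen_Ioo).measurableSet
  set I : Set ℝ := Set.Ioo (m - r) (m + r) with hI
  have h1 : (⋃ u ∈ insert m s, Set.Ioo (u - r) (u + r)) = A ∪ (I \ A) := by
    rw [Finset.set_biUnion_insert, Set.union_diff_self, Set.union_comm]
  rw [h1, measure_union Set.disjoint_sdiff_right (measurableSet_Ioo.diff hAmeas)]
  congr 1
  by_cases h : s.Nonempty
  · rw [dif_pos h]
    set m' : ℝ := s.max' h with hm'
    have hm'm : m' < m := hm m' (s.max'_mem h)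
    have hsub1 : Set.Ioo (max (m - r) (m' + r)) (m + r) ⊆ I \ A := by
      rintro t ⟨ht1, ht2⟩
      refine ⟨⟨lt_of_le_of_lt (le_max_left _ _) ht1, ht2⟩, ?_⟩
      intro htA
      rw [Set.mem_iUnion₂] at htA
      obtain ⟨u, hu, htu1, htu2⟩ := htA
      have : u ≤ m' := s.le_max' u hu
      have : m' + r ≤ t := le_of_lt (lt_of_le_of_lt (le_max_right _ _) ht1)
      linarith
    have hsub2 : I \ A ⊆ Set.Ico (max (m - r) (m' + r)) (m + r) := by
      rintro t ⟨⟨ht1, ht2⟩, htA⟩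
      have hm'r : m' + r ≤ t := by
        by_contra hcon
        push_neg at hcon
        have : t ∉ Set.Ioo (m' - r) (m' + r) := by
          intro ht
          exact htA (Set.mem_biUnion (s.max'_mem h) ht)
        rw [Set.mem_Ioo] at this
        push_neg at this
        have := this
        rcases lt_or_ge (m' - r) t with h1 | h1
        · exact absurd (this h1) (not_le.mpr hcon)
        · linarith
      exact ⟨max_le (le_of_lt ht1) hm'r, ht2⟩
    have hv1 : volume (Set.Ioo (max (m - r) (m' + r)) (m + r)) ≤ volume (I \ A) := measure_mono hsub1
    have hv2 : volume (I \ A) ≤ volume (Set.Ico (max (m - r) (m' + r)) (m + r)) := measure_mono hsub2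
    rw [Real.volume_Ioo] at hv1
    rw [Real.volume_Ico] at hv2
    have : volume (I \ A) = ENNReal.ofReal ((m + r) - max (m - r) (m' + r)) :=
      le_antisymm hv2 hv1
    rw [this]
    congr 1
    rcases le_total (m - r) (m' + r) with hc | hc
    · rw [max_eq_right hc, min_eq_right (by linarith)]
      ring
    · rw [max_eq_left hc, min_eq_left (by linarith)]
      ring
  · rw [dif_neg h]
    have : s = ∅ := Finset.not_nonempty_iff_eq_empty.mp h
    have hAe : A = ∅ := by simp [hA, this]
    rw [hAe, Set.diff_empty, Real.volume_Ioo]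
    congr 1
    ring

/-- Key measure estimate: shrinking the radius of a finite union of intervals by a factor
`lam` shrinks the measure by at most the factor `lam`. -/
lemma key_vol (R lam : ℝ) (hR : 0 < R) (h0 : 0 < lam) (h1 : lam ≤ 1) (F : Finset ℝ) :
    ENNReal.ofReal lam * volume (⋃ u ∈ F, Set.Ioo (u - R) (u + R)) ≤
      volume (⋃ u ∈ F, Set.Ioo (u - lam * R) (u + lam * R)) := by
  classical
  induction F using Finset.induction_on_max with
  | empty => simp
  | insert m s hm ih =>
    have hρ : 0 < lam * R := mul_pos h0 hR
    rw [vol_biUnion_insert_max R hR m s hm, vol_biUnion_insert_max (lam * R) hρ m s hm,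
      mul_add]
    refine add_le_add ih ?_
    by_cases h : s.Nonempty
    · rw [dif_pos h, dif_pos h]
      rw [← ENNReal.ofReal_mul h0.le]
      apply ENNReal.ofReal_le_ofReal
      have hd : 0 < m - s.max' h := sub_pos.mpr (hm _ (s.max'_mem h))
      refine le_min ?_ ?_
      · calc lam * min (2 * R) (m - s.max' h) ≤ lam * (2 * R) :=
              mul_le_mul_of_nonneg_left (min_le_left _ _) h0.le
          _ = 2 * (lam * R) := by ring
      · calc lam * min (2 * R) (m - s.max' h) ≤ 1 * min (2 * R) (m - s.max' h) :=
              mul_le_mul_of_nonneg_right h1 (le_min (by linarith) hd.le)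
          _ = min (2 * R) (m - s.max' h) := one_mul _
          _ ≤ m - s.max' h := min_le_right _ _
    · rw [dif_neg h, dif_neg h, ← ENNReal.ofReal_mul h0.le]
      apply ENNReal.ofReal_le_ofReal
      exact le_of_eq (by ring)

/-- Asymptotic tightness of the statistical measures along the orbit of `y₀`: a proportion
at least `1 - ε` of the time spent in `B_R = φ_{(-R,R)}Ψ` is spent in a compact subset. -/
theorem asymptotic_tightness_of_statistical_measures
    [LocallyCompactSpace X] [SecondCountableTopology X] [T2Space X]
    (φ : Flow ℝ X) (Y : Set X) (hYne : Y.Nonempty) (hYcl : IsClosed Y)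
    (hYnc : ¬ IsCompact Y)
    (hmin : ∀ y ∈ Y, closure (flowOrbit φ y) = Y)
    (hmulti : ∃ y ∈ Y, ∃ y' ∈ Y, y' ∉ flowOrbit φ y)
    (Ψ : Set X) (hΨpre : IsCompact (closure Ψ)) (hΨsec : IsFlowSection φ Ψ)
    (hopen : ∀ R : ℝ, 0 < R → IsOpen (flowSet φ (Set.Ioo (-R) R) Ψ))
    (hcap : Y ∩ closure Ψ = Y ∩ Ψ) (hne : (Y ∩ Ψ).Nonempty)
    (y₀ : X) (hy₀ : y₀ ∈ Y) (R : ℝ) (hR : 0 < R)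
    (ε : ℝ) (hε₀ : 0 < ε) (hε₁ : ε < 1) :
    ∃ K : Set X, IsCompact K ∧ K ⊆ flowSet φ (Set.Ioo (-R) R) Ψ ∧
      ∃ T₀ : ℝ, 0 < T₀ ∧ ∀ T : ℝ, T₀ ≤ T →
        ENNReal.ofReal (1 - ε) *
            volume {t ∈ Set.Icc (-T) T | φ t y₀ ∈ flowSet φ (Set.Ioo (-R) R) Ψ} ≤
          volume {t ∈ Set.Icc (-T) T | φ t y₀ ∈ K} := by
  classical
  set B : Set X := flowSet φ (Set.Ioo (-R) R) Ψ with hB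
  set S : Set ℝ := {t : ℝ | φ t y₀ ∈ Ψ} with hSdef
  -- the orbit of y₀ stays in Y
  have horb : ∀ t : ℝ, φ t y₀ ∈ Y := by
    intro t
    have h1 : φ t y₀ ∈ flowOrbit φ y₀ := ⟨t, rfl⟩
    have h2 := subset_closure h1
    rwa [hmin y₀ hy₀] at h2
  have hcont : Continuous fun t : ℝ => φ t y₀ :=
    φ.continuous continuous_id continuous_const
  -- S is closed
  have hSeq : S = {t : ℝ | φ t y₀ ∈ closure Ψ} := by
    ext t
    simp only [hSdef, Set.mem_setOf_eq]
    constructor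
    · exact fun h => subset_closure h
    · intro h
      have h2 : φ t y₀ ∈ Y ∩ closure Ψ := ⟨horb t, h⟩
      rw [hcap] at h2
      exact h2.2
  have hSclosed : IsClosed S := by
    rw [hSeq]
    exact isClosed_closure.preimage hcont
  have hSdisc : DiscreteTopology ↥S := hΨsec y₀
  have hSfin : ∀ a b : ℝ, (S ∩ Set.Icc a b).Finite := by
    intro a b
    have hc : IsCompact (S ∩ Set.Icc a b) := isCompact_Icc.inter_left hSclosed
    exact hc.finite (isDiscrete_iff_discreteTopology.mpr (DiscreteTopology.of_subset hSdisc Set.inter_subset_left))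
  -- parameters
  set lam : ℝ := 1 - ε / 2 with hlamdef
  have hlam0 : 0 < lam := by simp only [hlamdef]; linarith
  have hlam1 : lam ≤ 1 := by simp only [hlamdef]; linarith
  set ρ : ℝ := lam * R with hρdef
  have hρ0 : 0 < ρ := mul_pos hlam0 hR
  have hρR : ρ < R := by
    have : lam < 1 := by simp only [hlamdef]; linarith
    nlinarith
  -- the two unions of intervals
  set A : Set ℝ := ⋃ u ∈ S, Set.Ioo (u - R) (u + R) with hAdef
  set A' : Set ℝ := ⋃ u ∈ S, Set.Ioo (u - ρ) (u + ρ) with hA'def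
  have hAmem : ∀ t : ℝ, φ t y₀ ∈ B ↔ t ∈ A := by
    intro t
    constructor
    · rintro ⟨s, hs, x, hx, hxe⟩
      have hux : φ (t - s) y₀ = x := by
        calc φ (t - s) y₀ = φ (-s + t) y₀ := by rw [show t - s = -s + t by ring]
          _ = φ (-s) (φ t y₀) := φ.map_add _ _ _
          _ = φ (-s) (φ s x) := by rw [hxe]
          _ = φ (-s + s) x := (φ.map_add _ _ _).symm
          _ = x := by rw [neg_add_cancel, φ.map_zero_apply]
      rw [Set.mem_Ioo] at hs
      refine Set.mem_biUnion (show t - s ∈ S from ?_) ?_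
      · show φ (t - s) y₀ ∈ Ψ
        rw [hux]; exact hx
      · rw [Set.mem_Ioo]
        exact ⟨by linarith [hs.2], by linarith [hs.1]⟩
    · intro ht
      rw [hAdef, Set.mem_iUnion₂] at ht
      obtain ⟨u, hu, htu⟩ := ht
      rw [Set.mem_Ioo] at htu
      obtain ⟨ht1, ht2⟩ := htu
      refine ⟨t - u, Set.mem_Ioo.mpr ⟨by linarith, by linarith⟩, φ u y₀, hu, ?_⟩
      calc φ t y₀ = φ (t - u + u) y₀ := by rw [show t - u + u = t by ring]
        _ = φ (t - u) (φ u y₀) := φ.map_add _ _ _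
  -- the compact set K
  set C : Set X := Y ∩ closure Ψ with hCdef
  have hCcomp : IsCompact C := hΨpre.inter_left hYcl
  have hCΨ : C ⊆ Ψ := by rw [hcap]; exact Set.inter_subset_right
  set K : Set X := (fun p : ℝ × X => φ p.1 p.2) '' (Set.Icc (-ρ) ρ ×ˢ C) with hKdef
  have hKcomp : IsCompact K := by
    apply (isCompact_Icc.prod hCcomp).image
    exact φ.continuous continuous_fst continuous_snd
  have hKB : K ⊆ B := by
    rintro _ ⟨⟨s, x⟩, ⟨hs, hx⟩, rfl⟩
    rw [Set.mem_Icc] at hs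
    exact ⟨s, Set.mem_Ioo.mpr ⟨by linarith [hs.1], by linarith [hs.2]⟩, x, hCΨ hx, rfl⟩
  have hKmem : ∀ t : ℝ, t ∈ A' → φ t y₀ ∈ K := by
    intro t ht
    rw [hA'def, Set.mem_iUnion₂] at ht
    obtain ⟨u, hu, htu⟩ := ht
    rw [Set.mem_Ioo] at htu
    obtain ⟨ht1, ht2⟩ := htu
    have hmemIcc : t - u ∈ Set.Icc (-ρ) ρ := Set.mem_Icc.mpr ⟨by linarith, by linarith⟩
    refine ⟨(t - u, φ u y₀), ⟨hmemIcc, ⟨horb u, subset_closure hu⟩⟩, ?_⟩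
    show φ (t - u) (φ u y₀) = φ t y₀
    rw [← φ.map_add, show t - u + u = t by ring]
  -- reduce to a statement about A and A'
  have main : ∃ T₀ : ℝ, 0 < T₀ ∧ ∀ T : ℝ, T₀ ≤ T →
      ENNReal.ofReal (1 - ε) * volume (A ∩ Set.Icc (-T) T) ≤
        volume (A' ∩ Set.Icc (-T) T) := by
    have hkey : ∀ (G : Set ℝ), G.Finite →
        ENNReal.ofReal lam * volume (⋃ u ∈ G, Set.Ioo (u - R) (u + R)) ≤
          volume (⋃ u ∈ G, Set.Ioo (u - ρ) (u + ρ)) := by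
      intro G hG
      have h := key_vol R lam hR hlam0 hlam1 hG.toFinset
      have e1 : (⋃ u ∈ hG.toFinset, Set.Ioo (u - R) (u + R)) =
          ⋃ u ∈ G, Set.Ioo (u - R) (u + R) := by
        ext t; simp [Set.Finite.mem_toFinset]
      have e2 : (⋃ u ∈ hG.toFinset, Set.Ioo (u - lam * R) (u + lam * R)) =
          ⋃ u ∈ G, Set.Ioo (u - lam * R) (u + lam * R) := by
        ext t; simp [Set.Finite.mem_toFinset]
      rw [hρdef]
      rwa [e1, e2] at h
    by_cases hbd : Bornology.IsBounded S
    · obtain ⟨B₀, hB₀⟩ := isBounded_iff_forall_norm_le.mp hbd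
      have habs : ∀ u ∈ S, |u| ≤ |B₀| := fun u hu =>
        le_trans (by simpa [Real.norm_eq_abs] using hB₀ u hu) (le_abs_self B₀)
      have hSf : S.Finite :=
        (hSfin (-|B₀|) |B₀|).subset fun u hu => ⟨hu, Set.mem_Icc.mpr (abs_le.mp (habs u hu))⟩
      refine ⟨|B₀| + R + 1, by positivity, fun T hT => ?_⟩
      have hA'sub : A' ⊆ Set.Icc (-T) T := by
        rw [hA'def]
        refine Set.iUnion₂_subset fun u hu => ?_
        intro t ht
        rw [Set.mem_Ioo] at ht
        have h1 := abs_le.mp (habs u hu)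
        exact Set.mem_Icc.mpr ⟨by linarith [h1.1, ht.1], by linarith [h1.2, ht.2]⟩
      calc ENNReal.ofReal (1 - ε) * volume (A ∩ Set.Icc (-T) T)
          ≤ ENNReal.ofReal lam * volume A :=
            mul_le_mul' (ENNReal.ofReal_le_ofReal (by simp only [hlamdef]; linarith))
              (measure_mono Set.inter_subset_left)
        _ ≤ volume A' := by rw [hAdef, hA'def]; exact hkey S hSf
        _ = volume (A' ∩ Set.Icc (-T) T) := by
            rw [Set.inter_eq_self_of_subset_left hA'sub]
    · have hU : ∀ c : ℝ, ∃ u ∈ S, c < |u| := by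
        intro c
        by_contra hcon
        push_neg at hcon
        exact hbd (isBounded_iff_forall_norm_le.mpr
          ⟨c, fun x hx => by rw [Real.norm_eq_abs]; exact hcon x hx⟩)
      have hgrow : ∀ n : ℕ, ∃ T : ℝ, 0 < T ∧
          ENNReal.ofReal (2 * R) * n ≤ volume (A ∩ Set.Icc (-T) T) := by
        intro n
        induction n with
        | zero => exact ⟨1, one_pos, by simp⟩
        | succ n ih =>
          obtain ⟨T, hT, hvol⟩ := ih
          obtain ⟨u, hu, habs⟩ := hU (T + 3 * R)
          have hTu : T < |u| := by linarith [habs, hR]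
          refine ⟨|u| + R, by positivity, ?_⟩
          have hIA : Set.Ioo (u - R) (u + R) ⊆ A := by
            rw [hAdef]
            exact Set.subset_biUnion_of_mem (u := fun v => Set.Ioo (v - R) (v + R)) hu
          have hsub : (A ∩ Set.Icc (-T) T) ∪ Set.Ioo (u - R) (u + R) ⊆
              A ∩ Set.Icc (-(|u| + R)) (|u| + R) := by
            rintro t (⟨htA, htJ⟩ | htI)
            · rw [Set.mem_Icc] at htJ
              exact ⟨htA, Set.mem_Icc.mpr ⟨by linarith [htJ.1], by linarith [htJ.2]⟩⟩
            · have h1 := htI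
              rw [Set.mem_Ioo] at h1
              exact ⟨hIA htI, Set.mem_Icc.mpr
                ⟨by linarith [h1.1, neg_abs_le u], by linarith [h1.2, le_abs_self u]⟩⟩
          have hdisj : Disjoint (A ∩ Set.Icc (-T) T) (Set.Ioo (u - R) (u + R)) := by
            rw [Set.disjoint_left]
            rintro t ⟨_, htJ⟩ htI
            rw [Set.mem_Icc] at htJ
            rw [Set.mem_Ioo] at htI
            rcases lt_abs.mp habs with h | h
            · linarith [htJ.2, htI.1]
            · linarith [htJ.1, htI.2]
          calc ENNReal.ofReal (2 * R) * ((n + 1 : ℕ) : ENNReal)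
              = ENNReal.ofReal (2 * R) * (n : ENNReal) + ENNReal.ofReal (2 * R) := by
                push_cast; ring
            _ ≤ volume (A ∩ Set.Icc (-T) T) + volume (Set.Ioo (u - R) (u + R)) := by
                refine add_le_add hvol (le_of_eq ?_)
                rw [Real.volume_Ioo]
                congr 1
                ring
            _ = volume ((A ∩ Set.Icc (-T) T) ∪ Set.Ioo (u - R) (u + R)) :=
                (measure_union hdisj measurableSet_Ioo).symm
            _ ≤ volume (A ∩ Set.Icc (-(|u| + R)) (|u| + R)) := measure_mono hsub
      obtain ⟨T₀, hT₀pos, hT₀vol⟩ := hgrow ⌈4 / ε⌉₊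
      have hM0 : ENNReal.ofReal (8 * R / ε) ≤ volume (A ∩ Set.Icc (-T₀) T₀) := by
        refine le_trans ?_ hT₀vol
        rw [← ENNReal.ofReal_natCast, ← ENNReal.ofReal_mul (by positivity)]
        apply ENNReal.ofReal_le_ofReal
        have hn : (4 / ε : ℝ) ≤ (⌈4 / ε⌉₊ : ℝ) := Nat.le_ceil _
        calc 8 * R / ε = 2 * R * (4 / ε) := by field_simp; ring
          _ ≤ 2 * R * (⌈4 / ε⌉₊ : ℝ) := by
              exact mul_le_mul_of_nonneg_left hn (by positivity)
      refine ⟨T₀, hT₀pos, fun T hT => ?_⟩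
      have hM : ENNReal.ofReal (8 * R / ε) ≤ volume (A ∩ Set.Icc (-T) T) :=
        le_trans hM0 (measure_mono (Set.inter_subset_inter_right A
          (Set.Icc_subset_Icc (by linarith) hT)))
      have hFfin := hSfin (-(T + R)) (T + R)
      set F : Set ℝ := S ∩ Set.Icc (-(T + R)) (T + R) with hFdef
      set AF : Set ℝ := ⋃ u ∈ F, Set.Ioo (u - R) (u + R) with hAFdef
      set AF' : Set ℝ := ⋃ u ∈ F, Set.Ioo (u - ρ) (u + ρ) with hAF'def
      have hi : A ∩ Set.Icc (-T) T ⊆ AF := by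
        rintro t ⟨ht, htJ⟩
        rw [hAdef, Set.mem_iUnion₂] at ht
        obtain ⟨u, hu, htu⟩ := ht
        rw [Set.mem_Ioo] at htu
        rw [Set.mem_Icc] at htJ
        refine Set.mem_biUnion (show u ∈ F from ⟨hu, Set.mem_Icc.mpr
          ⟨by linarith [htJ.1, htu.2], by linarith [htJ.2, htu.1]⟩⟩) ?_
        exact Set.mem_Ioo.mpr ⟨htu.1, htu.2⟩
      have hii : AF' ∩ Set.Icc (-T) T ⊆ A' ∩ Set.Icc (-T) T := by
        refine Set.inter_subset_inter_left _ ?_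
        rw [hAF'def, hA'def]
        exact Set.biUnion_subset_biUnion_left Set.inter_subset_left
      have hiii : AF' \ Set.Icc (-T) T ⊆
          Set.Icc (-(T + 2 * R)) (-T) ∪ Set.Icc T (T + 2 * R) := by
        rintro t ⟨ht, htJ⟩
        rw [hAF'def, Set.mem_iUnion₂] at ht
        obtain ⟨u, hu, htu⟩ := ht
        rw [Set.mem_Ioo] at htu
        have huI : |u| ≤ T + R := by
          have h2 := hu.2
          rw [Set.mem_Icc] at h2
          exact abs_le.mpr h2
        have h3 := abs_le.mp huI
        rw [Set.mem_Icc] at htJ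
        push_neg at htJ
        rcases le_or_gt (-T) t with hc | hc
        · right
          exact Set.mem_Icc.mpr ⟨le_of_lt (htJ hc),
            by linarith [htu.2, h3.2, hρR]⟩
        · left
          exact Set.mem_Icc.mpr ⟨by linarith [htu.1, h3.1, hρR], le_of_lt hc⟩
      have hsplit : volume AF' = volume (AF' ∩ Set.Icc (-T) T) +
          volume (AF' \ Set.Icc (-T) T) :=
        (measure_inter_add_diff AF' measurableSet_Icc).symm
      have hdiffle : volume (AF' \ Set.Icc (-T) T) ≤ ENNReal.ofReal (4 * R) := by
        refine le_trans (measure_mono hiii) ?_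
        refine le_trans (measure_union_le _ _) ?_
        rw [Real.volume_Icc, Real.volume_Icc,
          ← ENNReal.ofReal_add (by linarith) (by linarith)]
        exact ENNReal.ofReal_le_ofReal (le_of_eq (by ring))
      have hchain : ENNReal.ofReal (1 - ε) * volume (A ∩ Set.Icc (-T) T) +
          ENNReal.ofReal (ε / 2) * volume (A ∩ Set.Icc (-T) T) ≤
          volume (A' ∩ Set.Icc (-T) T) +
            ENNReal.ofReal (ε / 2) * volume (A ∩ Set.Icc (-T) T) := by
        calc ENNReal.ofReal (1 - ε) * volume (A ∩ Set.Icc (-T) T) +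
              ENNReal.ofReal (ε / 2) * volume (A ∩ Set.Icc (-T) T)
            = ENNReal.ofReal lam * volume (A ∩ Set.Icc (-T) T) := by
              rw [← add_mul, ← ENNReal.ofReal_add (by linarith) (by linarith)]
              congr 2
              simp only [hlamdef]
              ring
          _ ≤ ENNReal.ofReal lam * volume AF := mul_le_mul_right (measure_mono hi) _
          _ ≤ volume AF' := by rw [hAFdef, hAF'def]; exact hkey F hFfin
          _ = volume (AF' ∩ Set.Icc (-T) T) + volume (AF' \ Set.Icc (-T) T) := hsplit
          _ ≤ volume (A' ∩ Set.Icc (-T) T) + ENNReal.ofReal (4 * R) :=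
              add_le_add (measure_mono hii) hdiffle
          _ ≤ volume (A' ∩ Set.Icc (-T) T) +
              ENNReal.ofReal (ε / 2) * volume (A ∩ Set.Icc (-T) T) := by
              refine add_le_add_right ?_ _
              calc ENNReal.ofReal (4 * R)
                  = ENNReal.ofReal (ε / 2) * ENNReal.ofReal (8 * R / ε) := by
                    rw [← ENNReal.ofReal_mul (by positivity)]
                    congr 1
                    field_simp
                    ring
                _ ≤ ENNReal.ofReal (ε / 2) * volume (A ∩ Set.Icc (-T) T) :=
                    mul_le_mul_right hM _
      have hfin : ENNReal.ofReal (ε / 2) * volume (A ∩ Set.Icc (-T) T) ≠ ⊤ := by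
        apply ENNReal.mul_ne_top ENNReal.ofReal_ne_top
        exact (lt_of_le_of_lt (measure_mono Set.inter_subset_right)
          measure_Icc_lt_top).ne
      exact (ENNReal.add_le_add_iff_right hfin).mp hchain
  obtain ⟨T₀, hT₀pos, hT₀⟩ := main
  refine ⟨K, hKcomp, hKB, T₀, hT₀pos, fun T hT => ?_⟩
  have e1 : {t ∈ Set.Icc (-T) T | φ t y₀ ∈ B} = A ∩ Set.Icc (-T) T := by
    ext t
    constructor
    · rintro ⟨h1, h2⟩; exact ⟨(hAmem t).mp h2, h1⟩
    · rintro ⟨h1, h2⟩; exact ⟨h2, (hAmem t).mpr h1⟩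
  have e2 : A' ∩ Set.Icc (-T) T ⊆ {t ∈ Set.Icc (-T) T | φ t y₀ ∈ K} := by
    rintro t ⟨h1, h2⟩; exact ⟨h2, hKmem t h1⟩
  calc ENNReal.ofReal (1 - ε) * volume {t ∈ Set.Icc (-T) T | φ t y₀ ∈ B}
      = ENNReal.ofReal (1 - ε) * volume (A ∩ Set.Icc (-T) T) := by rw [e1]
    _ ≤ volume (A' ∩ Set.Icc (-T) T) := hT₀ T hT
    _ ≤ volume {t ∈ Set.Icc (-T) T | φ t y₀ ∈ K} := measure_mono e2
end
end

section
/- Let Y ⊆ X be a φ-minimal set consisting of more than one φ-orbit, and assume there exists a precompact section Ψ ⊆ X for φ such that for every R > 0 the set B_R := φ_{(-R,R)}Ψ is open in X, and Y ∩ closure(Ψ) = Y ∩ Ψ ≠ ∅. Fix y₀ ∈ Y, R > 0, and write B = B_R. Suppose T_n → ∞ is a sequence of positive reals and ν is a finite Borel measure on X such that for every continuous compactly supported function f : X → ℝ with support contained in B, the ratios (∫_{-T_n}^{T_n} f(φ t y₀) dt) / (vol {t ∈ [-T_n, T_n] : φ t y₀ ∈ B}) converge to ∫ f dν. Then ν is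 invariant along flow lines in B: for every s ∈ ℝ and every continuous compactly supported f : X → ℝ with support of f contained in B and support of (f ∘ φ s) contained in B, we have ∫ f dν = ∫ (f ∘ φ s) dν. -/
open MeasureTheory

noncomputable section

variable {X : Type*} [TopologicalSpace X]

lemma aux_interval_growth (S : Set ℝ) (R : ℝ) (hR : 0 < R)
    (hint : ∀ t ∈ S, ∃ c : ℝ, t ∈ Set.Ioo c (c + 2*R) ∧ Set.Ioo c (c + 2*R) ⊆ S)
    (hub : ∀ M : ℝ, ∃ t ∈ S, M < t) (K : ℝ) :
    ∃ M : ℝ, ENNReal.ofReal K ≤ volume (S ∩ Set.Icc (-M) M) := by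
  have key : ∀ n : ℕ, ∃ M : ℝ, 0 ≤ M ∧
      ENNReal.ofReal (n * (2*R)) ≤ volume (S ∩ Set.Icc (-M) M) := by
    intro n
    induction n with
    | zero => exact ⟨0, le_refl 0, by simp⟩
    | succ n ih =>
      obtain ⟨M, hM0, hvol⟩ := ih
      obtain ⟨t, htS, htM⟩ := hub (M + 2*R)
      obtain ⟨c, htc, hsub⟩ := hint t htS
      obtain ⟨htc1, htc2⟩ := htc
      have hMc : M < c := by nlinarith
      refine ⟨c + 2*R, by nlinarith, ?_⟩
      have hdisj : Disjoint (S ∩ Set.Icc (-M) M) (Set.Ioo c (c + 2*R)) := by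
        rw [Set.disjoint_left]
        rintro x ⟨_, hx⟩ hx2
        exact absurd hx2.1 (not_lt.2 (hx.2.trans hMc.le))
      have hsub2 : (S ∩ Set.Icc (-M) M) ∪ Set.Ioo c (c + 2*R) ⊆
          S ∩ Set.Icc (-(c + 2*R)) (c + 2*R) := by
        rintro x (⟨hxS, hx1, hx2⟩ | hx)
        · exact ⟨hxS, le_trans (by nlinarith) hx1, hx2.trans (by nlinarith)⟩
        · exact ⟨hsub hx, le_trans (by nlinarith) hx.1.le, hx.2.le⟩
      have hcast : ((n + 1 : ℕ) : ℝ) * (2*R) = n * (2*R) + 2*R := by push_cast; ring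
      calc ENNReal.ofReal ((n + 1 : ℕ) * (2*R))
          = ENNReal.ofReal (n * (2*R)) + ENNReal.ofReal (2*R) := by
            rw [hcast, ENNReal.ofReal_add (by positivity) (by positivity)]
        _ ≤ volume (S ∩ Set.Icc (-M) M) + volume (Set.Ioo c (c + 2*R)) := by
            gcongr
            rw [Real.volume_Ioo]
            apply ENNReal.ofReal_le_ofReal; linarith
        _ = volume ((S ∩ Set.Icc (-M) M) ∪ Set.Ioo c (c + 2*R)) :=
            (measure_union hdisj measurableSet_Ioo).symm
        _ ≤ _ := measure_mono hsub2
  obtain ⟨n, hn⟩ := exists_nat_ge (K / (2*R))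
  obtain ⟨M, _, hvol⟩ := key n
  refine ⟨M, le_trans ?_ hvol⟩
  apply ENNReal.ofReal_le_ofReal
  rw [div_le_iff₀ (by positivity)] at hn
  linarith

/-- Any weak limit `ν` of the statistical measures along the orbit of `y₀` in
`B = φ_{(-R,R)}Ψ` is invariant along flow lines in `B`. -/
theorem limit_statistical_measure_flow_invariant_in_B
    [LocallyCompactSpace X] [SecondCountableTopology X] [T2Space X]
    [MeasurableSpace X] [BorelSpace X]
    (φ : Flow ℝ X) (Y : Set X) (hYne : Y.Nonempty) (hYcl : IsClosed Y)
    (hmin : ∀ y ∈ Y, closure (flowOrbit φ y) = Y)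
    (hmulti : ∃ y ∈ Y, ∃ y' ∈ Y, y' ∉ flowOrbit φ y)
    (Ψ : Set X) (hΨpre : IsCompact (closure Ψ)) (hΨsec : IsFlowSection φ Ψ)
    (hopen : ∀ R : ℝ, 0 < R → IsOpen (flowSet φ (Set.Ioo (-R) R) Ψ))
    (hcap : Y ∩ closure Ψ = Y ∩ Ψ) (hne : (Y ∩ Ψ).Nonempty)
    (y₀ : X) (hy₀ : y₀ ∈ Y) (R : ℝ) (hR : 0 < R)
    (B : Set X) (hB : B = flowSet φ (Set.Ioo (-R) R) Ψ)
    (T : ℕ → ℝ) (hTpos : ∀ n, 0 < T n)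
    (hT : Filter.Tendsto T Filter.atTop Filter.atTop)
    (ν : Measure X) (hν : IsFiniteMeasure ν)
    (hconv : ∀ f : X → ℝ, Continuous f → HasCompactSupport f → tsupport f ⊆ B →
      Filter.Tendsto
        (fun n => (∫ t in Set.Icc (-(T n)) (T n), f (φ t y₀)) /
          (volume {t ∈ Set.Icc (-(T n)) (T n) | φ t y₀ ∈ B}).toReal)
        Filter.atTop (nhds (∫ x, f x ∂ν)))
    (s : ℝ) (f : X → ℝ) (hf : Continuous f) (hfc : HasCompactSupport f)
    (hfsupp : tsupport f ⊆ B) (hfsupp' : tsupport (fun x => f (φ s x)) ⊆ B) :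
    ∫ x, f x ∂ν = ∫ x, f (φ s x) ∂ν := by
  classical
  -- The visit-time set
  set S : Set ℝ := {t : ℝ | φ t y₀ ∈ B} with hS
  have hcy : Continuous fun t : ℝ => φ t y₀ := φ.continuous continuous_id continuous_const
  have hBopen : IsOpen B := hB ▸ hopen R hR
  -- every visit time lies in an interval of length 2R of visit times
  have hint : ∀ t ∈ S, ∃ c : ℝ, t ∈ Set.Ioo c (c + 2*R) ∧ Set.Ioo c (c + 2*R) ⊆ S := by
    intro t ht
    have ht' : φ t y₀ ∈ flowSet φ (Set.Ioo (-R) R) Ψ := hB ▸ ht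
    obtain ⟨u, hu, x, hx, hux⟩ := ht'
    simp only [Set.mem_Ioo] at hu
    refine ⟨t - u - R, ?_, ?_⟩
    · simp only [Set.mem_Ioo]
      constructor <;> linarith
    · intro τ hτ
      simp only [Set.mem_Ioo] at hτ
      have key : φ τ y₀ = φ (τ - t + u) x := by
        have h1 : φ τ y₀ = φ (τ - t) (φ t y₀) := by
          rw [← φ.map_add]; ring_nf
        rw [h1, hux, ← φ.map_add]
      show φ τ y₀ ∈ B
      rw [hB]
      refine ⟨τ - t + u, ?_, x, hx, key⟩
      simp only [Set.mem_Ioo]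
      constructor <;> linarith
  -- there is a point of Y not on the orbit of y₀
  have hq : ∃ q ∈ Y, q ∉ flowOrbit φ y₀ := by
    obtain ⟨y, hy, y', hy', hnot⟩ := hmulti
    by_cases hyo : y ∈ flowOrbit φ y₀
    · refine ⟨y', hy', fun hy'o => hnot ?_⟩
      obtain ⟨a, ha⟩ := hyo
      obtain ⟨b, hb⟩ := hy'o
      have ha' : φ a y₀ = y := ha
      have hb' : φ b y₀ = y' := hb
      refine ⟨b - a, ?_⟩
      show φ (b - a) y = y'
      rw [← ha', ← hb', ← φ.map_add, sub_add_cancel]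
    · exact ⟨y, hy, hyo⟩
  obtain ⟨q, hqY, hqO⟩ := hq
  obtain ⟨p, hpY, hpΨ⟩ := hne
  have hpB : p ∈ B := by
    rw [hB]
    exact ⟨0, Set.mem_Ioo.2 ⟨by linarith, hR⟩, p, hpΨ, (φ.map_zero_apply p).symm⟩
  -- S is unbounded in absolute value
  have hubS : ∀ M : ℝ, ∃ t ∈ S, M < |t| := by
    intro M
    -- p ∈ closure (orbit q), so orbit q visits B
    have hpcl : p ∈ closure (flowOrbit φ q) := (hmin q hqY).symm ▸ hpY
    obtain ⟨z, hzB, hz⟩ : (B ∩ flowOrbit φ q).Nonempty :=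
      (mem_closure_iff.1 hpcl) B hBopen hpB
    obtain ⟨u, hu⟩ := hz
    have hu' : φ u q = z := hu
    set V : Set X := (fun x => φ u x) ⁻¹' B with hV
    have hVopen : IsOpen V := hBopen.preimage (φ.continuous_toFun u)
    have hqV : q ∈ V := by show φ u q ∈ B; rw [hu']; exact hzB
    set M' : ℝ := M + |u| + 1 with hM'
    set K : Set X := (fun t : ℝ => φ t y₀) '' Set.Icc (-M') M' with hK
    have hKc : IsCompact K := isCompact_Icc.image hcy
    have hqK : q ∉ K := by
      rintro ⟨t, _, ht⟩
      exact hqO ⟨t, ht⟩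
    have hqcl : q ∈ closure (flowOrbit φ y₀) := (hmin y₀ hy₀).symm ▸ hqY
    obtain ⟨w, ⟨hwV, hwK⟩, hw⟩ : ((V ∩ Kᶜ) ∩ flowOrbit φ y₀).Nonempty :=
      (mem_closure_iff.1 hqcl) (V ∩ Kᶜ) (hVopen.inter hKc.isClosed.isOpen_compl)
        ⟨hqV, hqK⟩
    obtain ⟨t, ht⟩ := hw
    have ht' : φ t y₀ = w := ht
    have htM : M' < |t| := by
      by_contra h
      push_neg at h
      exact hwK ⟨t, abs_le.1 h, ht⟩
    refine ⟨u + t, ?_, ?_⟩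
    · show φ (u + t) y₀ ∈ B
      rw [φ.map_add, ht']
      exact hwV
    · have h3 := abs_add_le (u + t) (-u)
      rw [abs_neg] at h3
      have h4 : u + t + -u = t := by ring
      rw [h4] at h3
      rw [hM'] at htM
      linarith
  -- hence the visit volume grows
  have hvolgrow : ∀ K : ℝ, ∃ M : ℝ, ENNReal.ofReal K ≤ volume (S ∩ Set.Icc (-M) M) := by
    by_cases hup : ∀ M : ℝ, ∃ t ∈ S, M < t
    · exact aux_interval_growth S R hR hint hup
    · push_neg at hup
      obtain ⟨M₀, hM₀⟩ := hup
      set S' : Set ℝ := Neg.neg ⁻¹' S with hS'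
      have hint' : ∀ t ∈ S', ∃ c : ℝ, t ∈ Set.Ioo c (c + 2*R) ∧ Set.Ioo c (c + 2*R) ⊆ S' := by
        intro t ht
        obtain ⟨c, htc, hsub⟩ := hint (-t) ht
        refine ⟨-(c + 2*R), ?_, ?_⟩
        · simp only [Set.mem_Ioo] at htc ⊢
          constructor <;> linarith
        · intro x hx
          simp only [Set.mem_Ioo] at hx
          show -x ∈ S
          exact hsub (by simp only [Set.mem_Ioo]; constructor <;> linarith)
      have hub' : ∀ M : ℝ, ∃ t ∈ S', M < t := by
        intro M
        obtain ⟨t, htS, htM⟩ := hubS (max M M₀)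
        have htneg : t < 0 := by
          by_contra h
          push_neg at h
          rw [abs_of_nonneg h] at htM
          exact absurd (hM₀ t htS) (not_le.2 ((le_max_right M M₀).trans_lt htM))
        rw [abs_of_neg htneg] at htM
        refine ⟨-t, ?_, lt_of_le_of_lt (le_max_left M M₀) htM⟩
        show -(-t) ∈ S
        rw [neg_neg]
        exact htS
      intro K
      obtain ⟨M, hM⟩ := aux_interval_growth S' R hR hint' hub' K
      refine ⟨M, le_trans hM (le_of_eq ?_)⟩
      have : S' ∩ Set.Icc (-M) M = Neg.neg ⁻¹' (S ∩ Set.Icc (-M) M) := by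
        ext x
        simp only [Set.mem_inter_iff, Set.mem_preimage, Set.mem_Icc]
        constructor
        · rintro ⟨h1, h2, h3⟩; exact ⟨h1, by linarith, by linarith⟩
        · rintro ⟨h1, h2, h3⟩; exact ⟨h1, by linarith, by linarith⟩
      rw [this, Measure.measure_preimage_neg]
  -- the denominator
  set D : ℕ → ℝ := fun n => (volume {t ∈ Set.Icc (-(T n)) (T n) | φ t y₀ ∈ B}).toReal with hD
  have hsep : ∀ a b : ℝ, {t ∈ Set.Icc a b | φ t y₀ ∈ B} = S ∩ Set.Icc a b := by
    intro a b
    ext t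
    simp only [Set.mem_sep_iff, Set.mem_inter_iff, hS, Set.mem_setOf_eq]
    tauto
  have hDtop : Filter.Tendsto D Filter.atTop Filter.atTop := by
    rw [Filter.tendsto_atTop]
    intro C
    obtain ⟨M, hM⟩ := hvolgrow C
    set M' : ℝ := max M 0 with hM'def
    have hM' : ENNReal.ofReal C ≤ volume (S ∩ Set.Icc (-M') M') :=
      hM.trans (measure_mono (Set.inter_subset_inter_right _
        (Set.Icc_subset_Icc (by simp [hM'def]) (le_max_left _ _))))
    filter_upwards [hT.eventually_ge_atTop M'] with n hn
    have hsub : S ∩ Set.Icc (-M') M' ⊆ S ∩ Set.Icc (-(T n)) (T n) :=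
      Set.inter_subset_inter_right _ (Set.Icc_subset_Icc (by linarith) hn)
    have hfin : volume (S ∩ Set.Icc (-(T n)) (T n)) ≠ ⊤ := by
      refine ne_top_of_le_ne_top ?_ (measure_mono (Set.inter_subset_right))
      rw [Real.volume_Icc]
      exact ENNReal.ofReal_ne_top
    have : ENNReal.ofReal C ≤ volume (S ∩ Set.Icc (-(T n)) (T n)) :=
      hM'.trans (measure_mono hsub)
    rw [hD]
    simp only [hsep]
    exact (ENNReal.ofReal_le_iff_le_toReal hfin).1 this
  -- the shifted function
  have hg : Continuous (fun x => f (φ s x)) := hf.comp (φ.continuous_toFun s)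
  have hgc : HasCompactSupport (fun x => f (φ s x)) :=
    hfc.comp_homeomorph (φ.toHomeomorph s)
  -- numerators
  set G : ℝ → ℝ := fun t => f (φ t y₀) with hG
  have hGc : Continuous G := hf.comp hcy
  set A : ℕ → ℝ := fun n => ∫ t in Set.Icc (-(T n)) (T n), G t with hA
  set A' : ℕ → ℝ := fun n => ∫ t in Set.Icc (-(T n)) (T n), G (t + s) with hA'
  have h1 : Filter.Tendsto (fun n => A n / D n) Filter.atTop (nhds (∫ x, f x ∂ν)) :=
    hconv f hf hfc hfsupp
  have h2 : Filter.Tendsto (fun n => A' n / D n) Filter.atTop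
      (nhds (∫ x, f (φ s x) ∂ν)) := by
    have := hconv (fun x => f (φ s x)) hg hgc hfsupp'
    refine this.congr (fun n => ?_)
    congr 1
    apply setIntegral_congr_fun measurableSet_Icc
    intro t _
    show f (φ s (φ t y₀)) = G (t + s)
    rw [hG, ← φ.map_add, add_comm s t]
  -- bound on the difference of numerators
  obtain ⟨C, hC⟩ := hfc.exists_bound_of_continuous hf
  have hGbd : ∀ t : ℝ, ‖G t‖ ≤ C := fun t => hC _
  have hC0 : 0 ≤ C := le_trans (norm_nonneg _) (hC (φ 0 y₀))
  have hdiff : ∀ n, |A n - A' n| ≤ 2 * C * |s| := by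
    intro n
    set a : ℝ := -(T n)
    set b : ℝ := T n
    have hab : a ≤ b := by have := hTpos n; simp only [a, b]; linarith
    have hAeq : A n = ∫ t in a..b, G t := by
      rw [intervalIntegral.integral_of_le hab, ← integral_Icc_eq_integral_Ioc]
    have hA'eq : A' n = ∫ t in (a+s)..(b+s), G t := by
      rw [← intervalIntegral.integral_comp_add_right G s,
        intervalIntegral.integral_of_le hab, ← integral_Icc_eq_integral_Ioc]
    have hii : ∀ x y : ℝ, IntervalIntegrable G volume x y := fun x y =>
      hGc.intervalIntegrable x y
    have hsplit1 : ∫ t in a..b, G t = (∫ t in a..(a+s), G t) + ∫ t in (a+s)..b, G t :=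
      (intervalIntegral.integral_add_adjacent_intervals (hii _ _) (hii _ _)).symm
    have hsplit2 : ∫ t in (a+s)..(b+s), G t =
        (∫ t in (a+s)..b, G t) + ∫ t in b..(b+s), G t :=
      (intervalIntegral.integral_add_adjacent_intervals (hii _ _) (hii _ _)).symm
    have heq : A n - A' n = (∫ t in a..(a+s), G t) - ∫ t in b..(b+s), G t := by
      rw [hAeq, hA'eq, hsplit1, hsplit2]; ring
    have hb1 : ‖∫ t in a..(a+s), G t‖ ≤ C * |a + s - a| :=
      intervalIntegral.norm_integral_le_of_norm_le_const (fun x _ => hGbd x)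
    have hb2 : ‖∫ t in b..(b+s), G t‖ ≤ C * |b + s - b| :=
      intervalIntegral.norm_integral_le_of_norm_le_const (fun x _ => hGbd x)
    simp only [add_sub_cancel_left] at hb1 hb2
    rw [heq]
    calc |(∫ t in a..(a+s), G t) - ∫ t in b..(b+s), G t|
        ≤ ‖∫ t in a..(a+s), G t‖ + ‖∫ t in b..(b+s), G t‖ := abs_sub _ _
      _ ≤ C * |s| + C * |s| := add_le_add hb1 hb2
      _ = 2 * C * |s| := by ring
  -- conclude
  have hzero : Filter.Tendsto (fun n => (A n - A' n) / D n) Filter.atTop (nhds 0) := by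
    refine squeeze_zero_norm' (a := fun n => (2 * C * |s|) / D n) ?_
      (Filter.Tendsto.div_atTop tendsto_const_nhds hDtop)
    filter_upwards [hDtop.eventually_gt_atTop 0] with n hn
    rw [Real.norm_eq_abs, abs_div, abs_of_pos hn]
    gcongr
    exact hdiff n
  have h3 : Filter.Tendsto (fun n => A n / D n - A' n / D n) Filter.atTop
      (nhds ((∫ x, f x ∂ν) - ∫ x, f (φ s x) ∂ν)) := h1.sub h2
  have h4 : (fun n => A n / D n - A' n / D n) = fun n => (A n - A' n) / D n := by
    funext n; rw [sub_div]
  rw [h4] at h3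
  have h5 := tendsto_nhds_unique h3 hzero
  linarith
end
end

section
/- Let δ > 0 and let E ⊆ ℝ be a compact set with E ⊆ (δ, ∞). For each integer m ≥ 1 let mE = {e₁ + e₂ + ⋯ + e_m : e₁, …, e_m ∈ E} denote the m-fold sumset of E. Then the union ⋃_{m ≥ 1} mE is a closed subset of ℝ. -/
/-- The `m`-fold sumset `mE = {e₁ + ⋯ + e_m : eᵢ ∈ E}` of a set `E ⊆ ℝ`. -/
def sumset (m : ℕ) (E : Set ℝ) : Set ℝ :=
  {x | ∃ f : Fin m → ℝ, (∀ i, f i ∈ E) ∧ ∑ i, f i = x}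

lemma sumset_eq_image (m : ℕ) (E : Set ℝ) :
    sumset m E = (fun f : Fin m → ℝ => ∑ i, f i) '' (Set.univ.pi fun _ => E) := by
  ext x
  simp [sumset, Set.mem_image, Set.mem_pi, eq_comm]

lemma isCompact_sumset (m : ℕ) (E : Set ℝ) (hE : IsCompact E) :
    IsCompact (sumset m E) := by
  rw [sumset_eq_image]
  exact (isCompact_univ_pi fun _ => hE).image (by continuity)

lemma sumset_lower (m : ℕ) (δ : ℝ) (E : Set ℝ) (hEsub : E ⊆ Set.Ioi δ)
    {x : ℝ} (hx : x ∈ sumset m E) : (m : ℝ) * δ ≤ x := by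
  obtain ⟨f, hf, rfl⟩ := hx
  calc (m : ℝ) * δ = ∑ _i : Fin m, δ := by simp [mul_comm]
    _ ≤ ∑ i, f i := Finset.sum_le_sum fun i _ => (hEsub (hf i)).le

/-- If `E` is a compact subset of `(δ, ∞)` with `δ > 0`, then the union of the `m`-fold
sumsets `mE` over `m ≥ 1` is closed in `ℝ`. -/
theorem isClosed_iUnion_sumsets (δ : ℝ) (hδ : 0 < δ) (E : Set ℝ)
    (hE : IsCompact E) (hEsub : E ⊆ Set.Ioi δ) :
    IsClosed (⋃ m : ℕ, ⋃ _ : 1 ≤ m, sumset m E) := by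
  apply LocallyFinite.isClosed_iUnion
  · intro x
    refine ⟨Set.Iio (x + 1), Iio_mem_nhds (by linarith), ?_⟩
    apply Set.Finite.subset (Set.finite_Iic ⌈(x + 1) / δ⌉₊)
    intro m hm
    obtain ⟨y, hy, hy'⟩ := hm
    simp only [Set.mem_iUnion] at hy
    obtain ⟨_, hys⟩ := hy
    have h1 : (m : ℝ) * δ ≤ y := sumset_lower m δ E hEsub hys
    have h2 : y < x + 1 := hy'
    have : (m : ℝ) ≤ (x + 1) / δ := by
      rw [le_div_iff₀ hδ]; linarith
    have : (m:ℝ) ≤ (⌈(x + 1) / δ⌉₊ : ℝ) := this.trans (Nat.le_ceil _)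
    exact_mod_cast this
  · intro m
    rcases Nat.eq_zero_or_pos m with h | h
    · simp [h]
    · have : (⋃ _ : 1 ≤ m, sumset m E) = sumset m E := by haveI : Nonempty (1 ≤ m) := ⟨h⟩; exact Set.iUnion_eq_const fun _ => rfl
      rw [this]
      exact (isCompact_sumset m E hE).isClosed
end

section
/- Let Γ be a discrete, torsion-free subgroup of G = PSL(2,ℝ) and let y, w ∈ G/Γ. Suppose y and w are A-proximal in forward time: there exist a sequence t_n → ∞ of real numbers and a sequence g_n → 1 in G such that a_{t_n}·y = g_n·(a_{t_n}·w) for every n. Then the horocycle orbit closures of y and w coincide: closure(N·y) = closure(N·w). -/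
noncomputable section

/-- `SL(2,ℝ)`. -/
abbrev SL2 := Matrix.SpecialLinearGroup (Fin 2) ℝ

/-- The metric on `SL(2,ℝ)` induced from the entries of the matrix. -/
instance : MetricSpace SL2 :=
  MetricSpace.induced (fun g : SL2 => Matrix.of.symm (g : Matrix (Fin 2) (Fin 2) ℝ))
    (fun _ _ h => Subtype.ext (Matrix.of.symm.injective h)) inferInstance

/-- The lower-triangular unipotent matrix `[[1,0],[s,1]]`. -/
def nMat (s : ℝ) : SL2 := ⟨!![1, 0; s, 1], by simp [Matrix.det_fin_two_of]⟩

/-- The diagonal matrix `diag(e^{t/2}, e^{-t/2})`. -/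
def aMat (t : ℝ) : SL2 :=
  ⟨!![Real.exp (t / 2), 0; 0, Real.exp (-(t / 2))], by
    simp [Matrix.det_fin_two_of, ← Real.exp_add]⟩

/-- `PSL(2,ℝ)`: the quotient of `SL(2,ℝ)` by its center `{±I}`. -/
abbrev PSL2 := SL2 ⧸ Subgroup.center SL2

/-- The class of `nMat s` in `PSL(2,ℝ)`, generating the stable horocycle flow. -/
def nPSL (s : ℝ) : PSL2 := QuotientGroup.mk (nMat s)

/-- The class of `aMat t` in `PSL(2,ℝ)`, generating the geodesic flow. -/
def aPSL (t : ℝ) : PSL2 := QuotientGroup.mk (aMat t)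

/-- The horocycle (`N`-) orbit of a point of `G/Γ`. -/
def Norbit {Γ : Subgroup PSL2} (x : PSL2 ⧸ Γ) : Set (PSL2 ⧸ Γ) :=
  Set.range (fun s : ℝ => nPSL s • x)

/-- A monoid is torsion-free if no element other than `1` has finite order
(the definition `Monoid.IsTorsionFree` of the older Mathlib, since removed). -/
def Monoid.IsTorsionFree (G : Type*) [Monoid G] : Prop :=
  ∀ g : G, g ≠ 1 → ¬IsOfFinOrder g

open Filter Topology Matrix

namespace HorocycleAux

/-- The entry-reading map, an isometry by definition of the metric. -/
def ψ : SL2 → (Fin 2 → Fin 2 → ℝ) := fun g => Matrix.of.symm (g : Matrix (Fin 2) (Fin 2) ℝ)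

lemma ψ_isometry : Isometry ψ := fun _ _ => rfl

lemma tendsto_sl2_iff {ι : Type*} {l : Filter ι} {F : ι → SL2} {L : SL2} :
    Tendsto F l (𝓝 L) ↔ ∀ i j,
      Tendsto (fun n => (F n : Matrix (Fin 2) (Fin 2) ℝ) i j) l
        (𝓝 ((L : Matrix (Fin 2) (Fin 2) ℝ) i j)) := by
  rw [show Tendsto F l (𝓝 L) ↔ _ from ψ_isometry.tendsto_nhds_iff, tendsto_pi_nhds]
  constructor
  · intro h i j
    have := h i
    rw [tendsto_pi_nhds] at this
    exact this j
  · intro h i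
    rw [tendsto_pi_nhds]
    exact fun j => h i j

lemma continuous_sl2_iff {X : Type*} [TopologicalSpace X] {f : X → SL2} :
    Continuous f ↔ ∀ i j,
      Continuous fun x => (f x : Matrix (Fin 2) (Fin 2) ℝ) i j := by
  constructor
  · intro h i j
    rw [continuous_iff_continuousAt] at h ⊢
    intro x
    exact (tendsto_sl2_iff.mp (h x)) i j
  · intro h
    rw [continuous_iff_continuousAt]
    intro x
    exact tendsto_sl2_iff.mpr fun i j => (h i j).continuousAt

lemma continuous_entry (i j : Fin 2) :
    Continuous fun g : SL2 => (g : Matrix (Fin 2) (Fin 2) ℝ) i j :=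
  continuous_sl2_iff.mp continuous_id i j

instance : IsTopologicalGroup SL2 where
  continuous_mul := by
    rw [continuous_sl2_iff]
    intro i j
    simp only [Matrix.SpecialLinearGroup.coe_mul, Matrix.mul_apply, Fin.sum_univ_two]
    exact (((continuous_entry i 0).comp continuous_fst).mul
        ((continuous_entry 0 j).comp continuous_snd)).add
      (((continuous_entry i 1).comp continuous_fst).mul
        ((continuous_entry 1 j).comp continuous_snd))
  continuous_inv := by
    rw [continuous_sl2_iff]
    intro i j
    have : ∀ g : SL2, ((g⁻¹ : SL2) : Matrix (Fin 2) (Fin 2) ℝ) =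
        !![(g : Matrix (Fin 2) (Fin 2) ℝ) 1 1, -(g : Matrix (Fin 2) (Fin 2) ℝ) 0 1;
           -(g : Matrix (Fin 2) (Fin 2) ℝ) 1 0, (g : Matrix (Fin 2) (Fin 2) ℝ) 0 0] := by
      intro g
      rw [Matrix.SpecialLinearGroup.coe_inv, Matrix.adjugate_fin_two]
    simp only [this]
    fin_cases i <;> fin_cases j <;>
      simp only [Matrix.cons_val_zero, Matrix.cons_val_one, Matrix.head_cons, Matrix.head_fin_const,
        Fin.isValue, Matrix.cons_val', Matrix.empty_val'] <;>
    · first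
      | exact continuous_entry _ _
      | exact (continuous_entry _ _).neg

/-- `-1` in `SL(2,ℝ)`. -/
def negI : SL2 := ⟨-1, by simp [Matrix.det_neg]⟩

lemma negI_mem_center : negI ∈ Subgroup.center SL2 := by
  rw [Matrix.SpecialLinearGroup.mem_center_iff]
  refine ⟨-1, by norm_num, ?_⟩
  show Matrix.diagonal _ = (negI : Matrix (Fin 2) (Fin 2) ℝ)
  ext i j
  by_cases hij : i = j <;>
    simp [Matrix.diagonal_apply, hij, negI, Matrix.neg_apply, Matrix.one_apply]

lemma center_eq {h : SL2} (hh : h ∈ Subgroup.center SL2) : h = 1 ∨ h = negI := by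
  rw [Matrix.SpecialLinearGroup.mem_center_iff] at hh
  obtain ⟨r, hr1, hr2⟩ := hh
  have hcard : Fintype.card (Fin 2) = 2 := by simp
  rw [hcard, sq, mul_self_eq_one_iff] at hr1
  rcases hr1 with h1 | h1
  · left
    ext i j
    rw [← hr2, h1]
    show Matrix.diagonal _ i j = _
    by_cases hij : i = j <;>
      simp [Matrix.diagonal_apply, hij, Matrix.one_apply]
  · right
    ext i j
    rw [← hr2, h1]
    show Matrix.diagonal _ i j = (negI : Matrix (Fin 2) (Fin 2) ℝ) i j
    by_cases hij : i = j <;>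
      simp [Matrix.diagonal_apply, hij, negI, Matrix.neg_apply, Matrix.one_apply]

lemma mk_negI : (QuotientGroup.mk negI : PSL2) = 1 :=
  (QuotientGroup.eq_one_iff _).mpr negI_mem_center

/-- A sequence converging to `1` in `PSL(2,ℝ)` lifts to a sequence converging to `1` in
`SL(2,ℝ)`. -/
lemma exists_lift_tendsto {g : ℕ → PSL2} (hg : Tendsto g atTop (𝓝 1)) :
    ∃ G : ℕ → SL2, (∀ n, (QuotientGroup.mk (G n) : PSL2) = g n) ∧
      Tendsto G atTop (𝓝 1) := by
  classical
  set H : ℕ → SL2 := fun n => Quotient.out (g n) with hH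
  have hHmk : ∀ n, (QuotientGroup.mk (H n) : PSL2) = g n := fun n => QuotientGroup.out_eq' (g n)
  set G : ℕ → SL2 := fun n =>
    if dist (negI * H n) 1 < dist (H n) 1 then negI * H n else H n with hG
  have hGmk : ∀ n, (QuotientGroup.mk (G n) : PSL2) = g n := by
    intro n
    by_cases hc : dist (negI * H n) 1 < dist (H n) 1
    · simp only [hG, if_pos hc]
      rw [QuotientGroup.mk_mul, mk_negI, one_mul, hHmk]
    · simp only [hG, if_neg hc, hHmk]
  refine ⟨G, hGmk, ?_⟩
  rw [show Tendsto G atTop (𝓝 1) ↔ _ from Metric.tendsto_nhds]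
  intro ε hε
  have hball : IsOpen (QuotientGroup.mk '' Metric.ball (1 : SL2) ε : Set PSL2) :=
    QuotientGroup.isOpenMap_coe _ Metric.isOpen_ball
  have hmem : (1 : PSL2) ∈ QuotientGroup.mk '' Metric.ball (1 : SL2) ε :=
    ⟨1, Metric.mem_ball_self hε, rfl⟩
  have hev : ∀ᶠ n in atTop, g n ∈ QuotientGroup.mk '' Metric.ball (1 : SL2) ε :=
    hg.eventually (hball.mem_nhds hmem)
  filter_upwards [hev] with n hn
  obtain ⟨v, hv, hvmk⟩ := hn
  rw [← hHmk n, QuotientGroup.eq] at hvmk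
  rcases center_eq hvmk with h1 | h1
  · -- v⁻¹ * H n = 1, so H n = v
    have hHv : H n = v := by
      have := congrArg (v * ·) h1
      simpa [mul_assoc] using this
    by_cases hc : dist (negI * H n) 1 < dist (H n) 1
    · have : dist (G n) 1 < dist (H n) 1 := by simp only [hG, if_pos hc]; exact hc
      calc dist (G n) 1 < dist (H n) 1 := this
        _ < ε := by rw [hHv]; exact Metric.mem_ball.mp hv
    · have : G n = H n := by simp only [hG, if_neg hc]
      rw [this, hHv]
      exact Metric.mem_ball.mp hv
  · -- v⁻¹ * H n = -1, so negI * H n = v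
    have hHv : negI * H n = v := by
      have h2 : H n = v * negI := by
        have := congrArg (v * ·) h1
        simpa [mul_assoc] using this
      have hcomm : v * negI = negI * v := Subgroup.mem_center_iff.mp negI_mem_center v
      have hnegsq : negI * negI = 1 := by
        ext i j
        rw [Matrix.SpecialLinearGroup.coe_mul]
        simp [negI]
      rw [h2, hcomm, ← mul_assoc, hnegsq, one_mul]
    by_cases hc : dist (negI * H n) 1 < dist (H n) 1
    · have : G n = negI * H n := by simp only [hG, if_pos hc]
      rw [this, hHv]
      exact Metric.mem_ball.mp hv
    · have hGn : G n = H n := by simp only [hG, if_neg hc]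
      push_neg at hc
      calc dist (G n) 1 = dist (H n) 1 := by rw [hGn]
        _ ≤ dist (negI * H n) 1 := hc
        _ < ε := by rw [hHv]; exact Metric.mem_ball.mp hv

lemma aMat_neg_mul (t : ℝ) : aMat (-t) * aMat t = 1 := by
  ext i j
  rw [Matrix.SpecialLinearGroup.coe_mul]
  fin_cases i <;> fin_cases j <;>
    simp [aMat, Matrix.mul_apply, Fin.sum_univ_two, neg_div, Real.exp_neg,
      inv_mul_cancel₀ (Real.exp_ne_zero _), mul_inv_cancel₀ (Real.exp_ne_zero _)]

lemma aPSL_neg (t : ℝ) : aPSL (-t) = (aPSL t)⁻¹ := by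
  have : aPSL (-t) * aPSL t = 1 := by
    rw [aPSL, aPSL, ← QuotientGroup.mk_mul, aMat_neg_mul]
    rfl
  exact eq_inv_of_mul_eq_one_left this

lemma nMat_mul (s u : ℝ) : nMat s * nMat u = nMat (s + u) := by
  ext i j
  rw [Matrix.SpecialLinearGroup.coe_mul]
  fin_cases i <;> fin_cases j <;>
    simp [nMat, Matrix.mul_apply, Fin.sum_univ_two, add_comm]

lemma nPSL_mul (s u : ℝ) : nPSL s * nPSL u = nPSL (s + u) := by
  rw [nPSL, nPSL, nPSL, ← QuotientGroup.mk_mul, nMat_mul]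

/-- The key matrix identity: `n_{-s} a_{-τ} h a_τ` explicitly. -/
lemma prod_entries (s τ : ℝ) (h : SL2) :
    (((nMat (-s) * (aMat (-τ) * (h * aMat τ)) : SL2)) : Matrix (Fin 2) (Fin 2) ℝ) =
      !![(h : Matrix (Fin 2) (Fin 2) ℝ) 0 0,
         (h : Matrix (Fin 2) (Fin 2) ℝ) 0 1 * (Real.exp (τ / 2))⁻¹ * (Real.exp (τ / 2))⁻¹;
         (h : Matrix (Fin 2) (Fin 2) ℝ) 1 0 * (Real.exp (τ / 2) * Real.exp (τ / 2)) -
           s * (h : Matrix (Fin 2) (Fin 2) ℝ) 0 0,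
         (h : Matrix (Fin 2) (Fin 2) ℝ) 1 1 -
           s * ((h : Matrix (Fin 2) (Fin 2) ℝ) 0 1 * (Real.exp (τ / 2))⁻¹ *
             (Real.exp (τ / 2))⁻¹)] := by
  have hh : (h : Matrix (Fin 2) (Fin 2) ℝ) =
      !![(h : Matrix (Fin 2) (Fin 2) ℝ) 0 0, (h : Matrix (Fin 2) (Fin 2) ℝ) 0 1;
         (h : Matrix (Fin 2) (Fin 2) ℝ) 1 0, (h : Matrix (Fin 2) (Fin 2) ℝ) 1 1] :=
    Matrix.eta_fin_two _
  have hN : ((nMat (-s) : SL2) : Matrix (Fin 2) (Fin 2) ℝ) = !![1, 0; -s, 1] := rfl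
  have hA1 : ((aMat (-τ) : SL2) : Matrix (Fin 2) (Fin 2) ℝ) =
      !![(Real.exp (τ / 2))⁻¹, 0; 0, Real.exp (τ / 2)] := by
    show !![Real.exp (-τ / 2), 0; 0, Real.exp (-(-τ / 2))] = _
    rw [neg_div, Real.exp_neg, neg_neg]
  have hA2 : ((aMat τ : SL2) : Matrix (Fin 2) (Fin 2) ℝ) =
      !![Real.exp (τ / 2), 0; 0, (Real.exp (τ / 2))⁻¹] := by
    show !![Real.exp (τ / 2), 0; 0, Real.exp (-(τ / 2))] = _
    rw [Real.exp_neg]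
  simp only [Matrix.SpecialLinearGroup.coe_mul]
  rw [hN, hA1, hA2, hh, Matrix.mul_fin_two, Matrix.mul_fin_two, Matrix.mul_fin_two]
  have he : Real.exp (τ / 2) ≠ 0 := Real.exp_ne_zero _
  ext i j
  fin_cases i <;> fin_cases j <;>
    · simp only [Matrix.cons_val_zero, Matrix.cons_val_one, Matrix.head_cons,
        Matrix.head_fin_const, Matrix.cons_val', Matrix.empty_val', Matrix.cons_val_fin_one, Matrix.of_apply,
        Fin.zero_eta, Fin.mk_one, Fin.isValue]
      first
      | (field_simp; ring)
      | field_simp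

end HorocycleAux

open HorocycleAux

/-- The main step: A-proximality implies `w` lies in the closure of the `N`-orbit of `y`. -/
lemma mem_closure_Norbit_of_A_proximal
    {Γ : Subgroup PSL2} (y w : PSL2 ⧸ Γ) (t : ℕ → ℝ) (g : ℕ → PSL2)
    (ht : Filter.Tendsto t Filter.atTop Filter.atTop)
    (hg : Filter.Tendsto g Filter.atTop (nhds 1))
    (hprox : ∀ n, aPSL (t n) • y = g n • (aPSL (t n) • w)) :
    w ∈ closure (Norbit y) := by
  obtain ⟨G, hGmk, hGtend⟩ := exists_lift_tendsto hg
  set E : ℕ → ℝ := fun n => Real.exp (t n / 2) with hE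
  have hEtend : Tendsto E atTop atTop :=
    Real.tendsto_exp_atTop.comp (ht.atTop_div_const two_pos)
  have hEinv : Tendsto (fun n => (E n)⁻¹) atTop (𝓝 0) :=
    tendsto_inv_atTop_zero.comp hEtend
  set ga : ℕ → ℝ := fun n => (G n : Matrix (Fin 2) (Fin 2) ℝ) 0 0 with hga
  set gb : ℕ → ℝ := fun n => (G n : Matrix (Fin 2) (Fin 2) ℝ) 0 1 with hgb
  set gc : ℕ → ℝ := fun n => (G n : Matrix (Fin 2) (Fin 2) ℝ) 1 0 with hgc
  set gd : ℕ → ℝ := fun n => (G n : Matrix (Fin 2) (Fin 2) ℝ) 1 1 with hgd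
  have hent := tendsto_sl2_iff.mp hGtend
  have h1 : ((1 : SL2) : Matrix (Fin 2) (Fin 2) ℝ) = 1 := rfl
  have hga1 : Tendsto ga atTop (𝓝 1) := by
    have := hent 0 0; rwa [h1, Matrix.one_apply_eq] at this
  have hgb0 : Tendsto gb atTop (𝓝 0) := by
    have := hent 0 1; rwa [h1, Matrix.one_apply_ne (by norm_num)] at this
  have hgc0 : Tendsto gc atTop (𝓝 0) := by
    have := hent 1 0; rwa [h1, Matrix.one_apply_ne (by norm_num)] at this
  have hgd1 : Tendsto gd atTop (𝓝 1) := by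
    have := hent 1 1; rwa [h1, Matrix.one_apply_eq] at this
  -- the horocycle parameter
  set s : ℕ → ℝ := fun n => gc n / ga n * (E n * E n) with hs
  -- the error term
  set M : ℕ → SL2 := fun n => nMat (-(s n)) * (aMat (-(t n)) * (G n * aMat (t n))) with hM
  have hane : ∀ᶠ n in atTop, ga n ≠ 0 := hga1.eventually_ne one_ne_zero
  have hMtend : Tendsto M atTop (𝓝 1) := by
    rw [tendsto_sl2_iff]
    have hMcoe : ∀ n, ((M n : SL2) : Matrix (Fin 2) (Fin 2) ℝ) =
        !![ga n, gb n * (E n)⁻¹ * (E n)⁻¹;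
           gc n * (E n * E n) - s n * ga n,
           gd n - s n * (gb n * (E n)⁻¹ * (E n)⁻¹)] := fun n => prod_entries _ _ _
    have h00 : Tendsto ga atTop (𝓝 1) := hga1
    have h01 : Tendsto (fun n => gb n * (E n)⁻¹ * (E n)⁻¹) atTop (𝓝 0) := by
      simpa using (hgb0.mul hEinv).mul hEinv
    have h10 : Tendsto (fun n => gc n * (E n * E n) - s n * ga n) atTop (𝓝 0) := by
      have hz : ∀ᶠ n in atTop, gc n * (E n * E n) - s n * ga n = 0 := by
        filter_upwards [hane] with n hn
        rw [hs]
        field_simp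
        ring
      exact Tendsto.congr' (by filter_upwards [hz] with n hn; exact hn.symm) tendsto_const_nhds
    have h11 : Tendsto (fun n => gd n - s n * (gb n * (E n)⁻¹ * (E n)⁻¹)) atTop (𝓝 1) := by
      have heq : ∀ n, gd n - s n * (gb n * (E n)⁻¹ * (E n)⁻¹) = gd n - gc n / ga n * gb n := by
        intro n
        have hEne : E n ≠ 0 := Real.exp_ne_zero _
        simp only [hs]
        rw [show gc n / ga n * (E n * E n) * (gb n * (E n)⁻¹ * (E n)⁻¹)
              = gc n / ga n * gb n * (E n * (E n)⁻¹ * (E n * (E n)⁻¹)) from by ring,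
          mul_inv_cancel₀ hEne]
        ring
      simp only [heq]
      have : Tendsto (fun n => gd n - gc n / ga n * gb n) atTop (𝓝 (1 - 0 / 1 * 0)) :=
        hgd1.sub ((hgc0.div hga1 one_ne_zero).mul hgb0)
      simpa using this
    intro i j
    fin_cases i <;> fin_cases j
    · simpa [hMcoe] using h00
    · simpa [hMcoe] using h01
    · simpa [hMcoe] using h10
    · simpa [hMcoe] using h11
  -- the PSL2-level error term
  set eps : ℕ → PSL2 := fun n => QuotientGroup.mk (M n) with heps
  have hepstend : Tendsto eps atTop (𝓝 1) := by
    have hcont : Continuous (QuotientGroup.mk : SL2 → PSL2) := QuotientGroup.continuous_mk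
    have := (hcont.tendsto 1).comp hMtend
    simp only [QuotientGroup.mk_one] at this
    exact this
  -- the algebraic identity
  have hkey : ∀ n, nPSL (-(s n)) • y = eps n • w := by
    intro n
    have hmk : eps n = nPSL (-(s n)) * ((aPSL (t n))⁻¹ * (g n * aPSL (t n))) := by
      rw [heps, hM]
      simp only [QuotientGroup.mk_mul]
      rw [hGmk n, ← aPSL_neg]
      rfl
    rw [hmk, mul_smul, mul_smul, mul_smul, ← hprox n,
      inv_smul_smul]
  -- conclude
  have hmemev : ∀ᶠ n in atTop, nPSL (-(s n)) • y ∈ Norbit y :=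
    Filter.Eventually.of_forall fun n => ⟨-(s n), rfl⟩
  have htendw : Tendsto (fun n => nPSL (-(s n)) • y) atTop (𝓝 w) := by
    have : Tendsto (fun n => eps n • w) atTop (𝓝 ((1 : PSL2) • w)) :=
      hepstend.smul tendsto_const_nhds
    rw [one_smul] at this
    exact Tendsto.congr (fun n => (hkey n).symm) this
  exact mem_closure_of_tendsto htendw hmemev

open Pointwise in
lemma closure_Norbit_subset {Γ : Subgroup PSL2} {y w : PSL2 ⧸ Γ}
    (h : y ∈ closure (Norbit w)) : closure (Norbit y) ⊆ closure (Norbit w) := by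
  apply closure_minimal _ isClosed_closure
  rintro _ ⟨u, rfl⟩
  have h2 : nPSL u • y ∈ nPSL u • closure (Norbit w) := Set.smul_mem_smul_set h
  have h3 : nPSL u • closure (Norbit w) ⊆ closure (nPSL u • Norbit w) :=
    smul_closure_subset (nPSL u) (Norbit w)
  have h4 : nPSL u • Norbit w ⊆ Norbit w := by
    rintro _ ⟨_, ⟨v, rfl⟩, rfl⟩
    refine ⟨u + v, ?_⟩
    show nPSL (u + v) • w = nPSL u • (nPSL v • w)
    rw [← nPSL_mul, mul_smul]
  exact (h3.trans (closure_mono h4)) h2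

/-- If `y, w ∈ G/Γ` are `A`-proximal in forward time, then their horocycle orbit
closures coincide. -/
theorem horocycle_orbit_closure_eq_of_A_proximal
    (Γ : Subgroup PSL2) (hΓd : DiscreteTopology Γ) (hΓt : Monoid.IsTorsionFree Γ)
    (y w : PSL2 ⧸ Γ) (t : ℕ → ℝ) (g : ℕ → PSL2)
    (ht : Filter.Tendsto t Filter.atTop Filter.atTop)
    (hg : Filter.Tendsto g Filter.atTop (nhds 1))
    (hprox : ∀ n, aPSL (t n) • y = g n • (aPSL (t n) • w)) :
    closure (Norbit y) = closure (Norbit w) := by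
  have hwy : w ∈ closure (Norbit y) :=
    mem_closure_Norbit_of_A_proximal y w t g ht hg hprox
  have hginv : Filter.Tendsto (fun n => (g n)⁻¹) Filter.atTop (nhds 1) := by
    have := hg.inv
    rwa [inv_one] at this
  have hprox' : ∀ n, aPSL (t n) • w = (g n)⁻¹ • (aPSL (t n) • y) := by
    intro n
    rw [hprox n, inv_smul_smul]
  have hyw : y ∈ closure (Norbit w) :=
    mem_closure_Norbit_of_A_proximal w y t (fun n => (g n)⁻¹) ht hginv hprox'
  exact le_antisymm (closure_Norbit_subset hyw) (closure_Norbit_subset hwy)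
end
end

section
/- Let S ⊆ ℝ be a nonempty set and g ∈ SL(2,ℝ). Then the set {n_s · a_t · g : s ∈ ℝ, t ∈ S} ⊆ SL(2,ℝ) has Hausdorff dimension equal to 1 + dimH S, where dimH S is the Hausdorff dimension of S as a subset of ℝ. (Dimension of an N-saturated product set over an A-slice.) -/
noncomputable section

section Auxiliary

open Set MeasureTheory
open scoped ENNReal NNReal

lemma my_diam_prod_le (A B : Set ℝ) :
    EMetric.diam (A ×ˢ B) ≤ max (EMetric.diam A) (EMetric.diam B) := by
  refine EMetric.diam_le fun p hp q hq => ?_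
  rw [Prod.edist_eq]
  exact max_le_max (EMetric.edist_le_diam_of_mem hp.1 hq.1)
    (EMetric.edist_le_diam_of_mem hp.2 hq.2)


set_option maxHeartbeats 1000000 in
/-- Core upper bound: if `μH[d] S = 0` then `μH[d+1] (Icc a b ×ˢ S) = 0`. -/
lemma upper_core (a b : ℝ) (hab : a ≤ b) (d : ℝ) (hd : 0 < d) (S : Set ℝ)
    (hS : μH[d] S = 0) : μH[d + 1] (Icc a b ×ˢ S) = 0 := by
  classical
  refine le_antisymm ?_ zero_le
  refine ENNReal.le_of_forall_pos_le_add fun ε hε _ => ?_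
  rw [zero_add, Measure.hausdorffMeasure_apply]
  refine iSup₂_le fun r hr => ?_
  -- real constants
  set β : ℝ := b - a + 1 with hβ
  have hβ0 : (0:ℝ) < β := by simp only [hβ]; linarith
  set η : ℝ := (ε : ℝ) / β with hη
  have hε0 : (0:ℝ) < ε := hε
  have hη0 : 0 < η := div_pos hε0 hβ0
  set δ : ℝ≥0∞ := ENNReal.ofReal (η / 2) with hδ
  have hδ0 : 0 < δ := ENNReal.ofReal_pos.2 (by linarith)
  -- scale
  set r' : ℝ≥0∞ := min r 1 with hr'
  have hr'0 : 0 < r' := lt_min hr zero_lt_one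
  have hr'top : r' ≠ ∞ :=
    ((min_le_right r 1).trans_lt ENNReal.one_lt_top).ne
  set ρ : ℝ := r'.toReal with hρ
  have hρ0 : 0 < ρ := ENNReal.toReal_pos hr'0.ne' hr'top
  have hρ1 : ρ ≤ 1 := by
    rw [hρ]
    exact ENNReal.toReal_le_of_le_ofReal zero_le_one (by rw [ENNReal.ofReal_one]; exact min_le_right r 1)
  have hρr : ENNReal.ofReal ρ ≤ r := by
    rw [hρ, ENNReal.ofReal_toReal hr'top]; exact min_le_left _ _
  -- extract a cover of S
  have hS' := hS
  rw [Measure.hausdorffMeasure_apply] at hS'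
  have hinf0 : (⨅ (t : ℕ → Set ℝ) (_ : S ⊆ ⋃ n, t n) (_ : ∀ n, EMetric.diam (t n) ≤ r'),
      ∑' n, ⨆ _ : (t n).Nonempty, EMetric.diam (t n) ^ d) < δ := by
    refine lt_of_le_of_lt ?_ hδ0
    calc (⨅ (t : ℕ → Set ℝ) (_ : S ⊆ ⋃ n, t n) (_ : ∀ n, EMetric.diam (t n) ≤ r'),
        ∑' n, ⨆ _ : (t n).Nonempty, EMetric.diam (t n) ^ d)
        ≤ ⨆ (r'' : ℝ≥0∞) (_ : 0 < r''), ⨅ (t : ℕ → Set ℝ) (_ : S ⊆ ⋃ n, t n)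
            (_ : ∀ n, EMetric.diam (t n) ≤ r''),
            ∑' n, ⨆ _ : (t n).Nonempty, EMetric.diam (t n) ^ d :=
          le_iSup₂ (f := fun (r'' : ℝ≥0∞) (_ : 0 < r'') =>
            ⨅ (t : ℕ → Set ℝ) (_ : S ⊆ ⋃ n, t n) (_ : ∀ n, EMetric.diam (t n) ≤ r''),
              ∑' n, ⨆ _ : (t n).Nonempty, EMetric.diam (t n) ^ d) r' hr'0
      _ = 0 := hS'.symm ▸ rfl
  simp only [iInf_lt_iff] at hinf0
  obtain ⟨t, htS, htd, htsum⟩ := hinf0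
  have htsum' : (∑' n, EMetric.diam (t n) ^ d) < δ := by
    refine lt_of_eq_of_lt (tsum_congr fun n => ?_) htsum
    rcases eq_empty_or_nonempty (t n) with he | hne
    · simp [he, EMetric.diam, ENNReal.zero_rpow_of_pos hd]
    · rw [iSup_pos hne]
  -- real diameters and padded lengths
  set D : ℕ → ℝ := fun n => (EMetric.diam (t n)).toReal with hD
  have hDtop : ∀ n, EMetric.diam (t n) ≠ ∞ :=
    fun n => ((htd n).trans_lt (lt_of_le_of_lt (min_le_right _ _) ENNReal.one_lt_top)).ne
  have hD0 : ∀ n, 0 ≤ D n := fun n => ENNReal.toReal_nonneg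
  have hDρ : ∀ n, D n ≤ ρ := fun n => ENNReal.toReal_mono hr'top (htd n)
  have hdiam_eq : ∀ n, EMetric.diam (t n) = ENNReal.ofReal (D n) :=
    fun n => (ENNReal.ofReal_toReal (hDtop n)).symm
  set q : ℝ := (2:ℝ)⁻¹ with hqdef
  have hq0 : (0:ℝ) < q := by norm_num
  have hq1 : q < 1 := by norm_num
  have hqd1 : q ^ d < 1 := Real.rpow_lt_one hq0.le hq1 hd
  have hqd0 : (0:ℝ) < q ^ d := Real.rpow_pos_of_pos hq0 d
  set θ : ℝ := ((η / 2) * (1 - q ^ d)) ^ (d⁻¹ : ℝ) with hθ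
  have hθ0 : 0 < θ := Real.rpow_pos_of_pos (mul_pos (by linarith) (by linarith)) _
  have hθd : θ ^ d = (η / 2) * (1 - q ^ d) := by
    rw [hθ, Real.rpow_inv_rpow (le_of_lt (mul_pos (by linarith) (by linarith))) hd.ne']
  set L : ℕ → ℝ := fun n => max (D n) (min ρ (θ * q ^ n)) with hL
  have hL0 : ∀ n, 0 < L n :=
    fun n => lt_max_of_lt_right (lt_min hρ0 (by positivity))
  have hLρ : ∀ n, L n ≤ ρ := fun n => max_le (hDρ n) (min_le_left _ _)
  have hL1 : ∀ n, L n ≤ 1 := fun n => (hLρ n).trans hρ1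
  -- the product cover
  set u : ℕ × ℕ → Set (ℝ × ℝ) := fun p =>
    (Icc a b ∩ Icc (a + p.2 * L p.1) (a + (p.2 + 1) * L p.1)) ×ˢ t p.1 with hu
  have hcover : Icc a b ×ˢ S ⊆ ⋃ p : ℕ × ℕ, u p := by
    rintro ⟨x, y⟩ ⟨hx, hy⟩
    obtain ⟨n, hn⟩ := mem_iUnion.1 (htS hy)
    set k : ℕ := ⌊(x - a) / L n⌋₊ with hk
    refine mem_iUnion.2 ⟨(n, k), ⟨⟨hx, ?_, ?_⟩, hn⟩⟩
    · have h1 : (k : ℝ) ≤ (x - a) / L n :=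
        Nat.floor_le (div_nonneg (by linarith [hx.1]) (hL0 n).le)
      have h2 := (le_div_iff₀ (hL0 n)).1 h1
      simp only
      linarith
    · have h1 : (x - a) / L n < (k : ℝ) + 1 := Nat.lt_floor_add_one _
      have h2 := (div_lt_iff₀ (hL0 n)).1 h1
      simp only
      linarith
  have hdiam_u : ∀ p : ℕ × ℕ, EMetric.diam (u p) ≤ ENNReal.ofReal (L p.1) := by
    rintro ⟨n, k⟩
    refine (my_diam_prod_le _ _).trans (max_le ?_ ?_)
    · refine (EMetric.diam_mono inter_subset_right).trans ?_
      rw [Real.ediam_Icc]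
      have heq : (a + ((k:ℝ) + 1) * L n) - (a + (k:ℝ) * L n) = L n := by ring
      rw [heq]
    · rw [hdiam_eq n]
      exact ENNReal.ofReal_le_ofReal (le_max_left _ _)
  have hdiam_u_r : ∀ p : ℕ × ℕ, EMetric.diam (u p) ≤ r :=
    fun p => (hdiam_u p).trans ((ENNReal.ofReal_le_ofReal (hLρ p.1)).trans hρr)
  -- plug the cover into the infimum
  set e : ℕ ≃ ℕ × ℕ := (Denumerable.eqv (ℕ × ℕ)).symm with he
  refine iInf₂_le_of_le (fun j => u (e j)) ?_ (iInf_le_of_le (fun j => hdiam_u_r _) ?_)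
  · refine hcover.trans fun z hz => ?_
    obtain ⟨p, hp⟩ := mem_iUnion.1 hz
    exact mem_iUnion.2 ⟨e.symm p, by simpa using hp⟩
  · have hre : (∑' j : ℕ, ⨆ _ : (u (e j)).Nonempty, EMetric.diam (u (e j)) ^ (d+1))
        = ∑' p : ℕ × ℕ, ⨆ _ : (u p).Nonempty, EMetric.diam (u p) ^ (d+1) :=
      e.tsum_eq fun p => ⨆ _ : (u p).Nonempty, EMetric.diam (u p) ^ (d+1)
    refine le_trans (le_of_eq hre) ?_
    rw [ENNReal.tsum_prod']
    have key : ∀ n : ℕ, (∑' k : ℕ, ⨆ _ : (u (n,k)).Nonempty, EMetric.diam (u (n,k)) ^ (d+1))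
        ≤ ENNReal.ofReal (β * L n ^ d) := by
      intro n
      set N : ℕ := ⌊(b - a) / L n⌋₊ + 1 with hN
      have hvanish : ∀ k : ℕ, k ∉ Finset.range N →
          (⨆ _ : (u (n,k)).Nonempty, EMetric.diam (u (n,k)) ^ (d+1)) = 0 := by
        intro k hk
        have hkN : N ≤ k := by simpa [Finset.mem_range, not_lt] using hk
        have hbk : b < a + k * L n := by
          have h1 : (b - a) / L n < (N : ℝ) := by
            rw [hN]; push_cast; exact Nat.lt_floor_add_one _
          have h2 : (b - a) / L n < (k : ℝ) := h1.trans_le (by exact_mod_cast hkN)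
          have h3 := (div_lt_iff₀ (hL0 n)).1 h2
          linarith
        have hempty : u (n,k) = ∅ := by
          rw [hu]
          simp only
          have h4 : Icc a b ∩ Icc (a + (k:ℝ) * L n) (a + ((k:ℝ) + 1) * L n) = ∅ := by
            refine eq_empty_of_forall_notMem fun x hx => ?_
            rcases hx with ⟨⟨_, hxb⟩, ⟨hxk, _⟩⟩
            linarith
          rw [h4, Set.empty_prod]
        simp [hempty]
      rw [tsum_eq_sum hvanish]
      have hterm : ∀ k ∈ Finset.range N,
          (⨆ _ : (u (n,k)).Nonempty, EMetric.diam (u (n,k)) ^ (d+1))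
            ≤ ENNReal.ofReal (L n ^ (d+1)) := by
        intro k _
        refine iSup_le fun _ => ?_
        refine le_trans (ENNReal.rpow_le_rpow (hdiam_u (n,k)) (by linarith)) ?_
        exact le_of_eq (ENNReal.ofReal_rpow_of_pos (hL0 n))
      refine (Finset.sum_le_card_nsmul _ _ _ hterm).trans ?_
      rw [Finset.card_range, nsmul_eq_mul]
      rw [← ENNReal.ofReal_natCast, ← ENNReal.ofReal_mul (p := (N:ℝ)) (by positivity)]
      refine ENNReal.ofReal_le_ofReal ?_
      have hNle : (N : ℝ) ≤ (b - a) / L n + 1 := by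
        rw [hN]; push_cast
        have := Nat.floor_le (div_nonneg (by linarith : (0:ℝ) ≤ b - a) (hL0 n).le)
        linarith
      have hLpow : L n ^ (d+1) = L n ^ d * L n := by
        rw [Real.rpow_add (hL0 n), Real.rpow_one]
      have hLd0 : 0 ≤ L n ^ d := Real.rpow_nonneg (hL0 n).le d
      calc (N:ℝ) * L n ^ (d+1) ≤ ((b - a)/L n + 1) * (L n ^ d * L n) := by
            rw [← hLpow]
            exact mul_le_mul_of_nonneg_right hNle (by positivity)
        _ = (b - a) * L n ^ d + L n ^ d * L n := by
            linear_combination (L n ^ d) * div_mul_cancel₀ (b - a) (hL0 n).ne'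
        _ ≤ (b - a) * L n ^ d + L n ^ d * 1 := by
            have := hL1 n
            nlinarith
        _ = β * L n ^ d := by rw [hβ]; ring
    refine le_trans (ENNReal.tsum_le_tsum key) ?_
    have hLd : ∀ n, L n ^ d ≤ D n ^ d + θ ^ d * (q ^ d) ^ n := by
      intro n
      have hqn : (0:ℝ) < θ * q ^ n := by positivity
      have hmax : L n ≤ max (D n) (θ * q ^ n) :=
        max_le_max le_rfl (min_le_right _ _)
      have hpow : (θ * q ^ n) ^ d = θ ^ d * (q ^ d) ^ n := by
        rw [Real.mul_rpow hθ0.le (by positivity)]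
        congr 1
        rw [← Real.rpow_natCast q n, ← Real.rpow_natCast (q ^ d) n,
          ← Real.rpow_mul hq0.le, ← Real.rpow_mul hq0.le, mul_comm]
      rcases le_total (D n) (θ * q ^ n) with hc | hc
      · have : L n ^ d ≤ (θ * q ^ n) ^ d :=
          Real.rpow_le_rpow (hL0 n).le (hmax.trans (by rw [max_eq_right hc])) hd.le
        rw [hpow] at this
        have h2 : 0 ≤ D n ^ d := Real.rpow_nonneg (hD0 n) d
        linarith
      · have : L n ^ d ≤ D n ^ d :=
          Real.rpow_le_rpow (hL0 n).le (hmax.trans (by rw [max_eq_left hc])) hd.le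
        have h2 : 0 ≤ θ ^ d * (q ^ d) ^ n := by positivity
        linarith
    calc (∑' n, ENNReal.ofReal (β * L n ^ d))
        ≤ ∑' n, (ENNReal.ofReal β *
            (ENNReal.ofReal (D n ^ d) + ENNReal.ofReal (θ ^ d * (q ^ d) ^ n))) := by
          refine ENNReal.tsum_le_tsum fun n => ?_
          rw [ENNReal.ofReal_mul hβ0.le]
          refine mul_le_mul_right ?_ _
          exact le_trans (ENNReal.ofReal_le_ofReal (hLd n)) ENNReal.ofReal_add_le
      _ = ENNReal.ofReal β * ((∑' n, ENNReal.ofReal (D n ^ d))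
            + ∑' n, ENNReal.ofReal (θ ^ d * (q ^ d) ^ n)) := by
          rw [ENNReal.tsum_mul_left, ENNReal.tsum_add]
      _ ≤ ENNReal.ofReal β * (δ + δ) := by
          refine mul_le_mul_right (add_le_add ?_ ?_) _
          · have heq : ∀ n, ENNReal.ofReal (D n ^ d) = EMetric.diam (t n) ^ d := by
              intro n
              rcases eq_or_lt_of_le (hD0 n) with h0 | h0
              · rw [← h0, Real.zero_rpow hd.ne', hdiam_eq n, ← h0]
                simp [ENNReal.zero_rpow_of_pos hd]
              · rw [← ENNReal.ofReal_rpow_of_pos h0, ← hdiam_eq n]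
            rw [tsum_congr heq]
            exact htsum'.le
          · have hsummable : Summable (fun n : ℕ => θ ^ d * (q ^ d) ^ n) :=
              (summable_geometric_of_lt_one hqd0.le hqd1).mul_left _
            rw [← ENNReal.ofReal_tsum_of_nonneg (fun n => by positivity) hsummable,
              tsum_mul_left, tsum_geometric_of_lt_one hqd0.le hqd1]
            refine ENNReal.ofReal_le_ofReal ?_
            rw [hθd]
            rw [mul_assoc, mul_inv_cancel₀ (by linarith : (1:ℝ) - q ^ d ≠ 0), mul_one]
      _ = ENNReal.ofReal (β * η) := by
          rw [hδ, ← ENNReal.ofReal_add (by linarith) (by linarith),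
            ← ENNReal.ofReal_mul hβ0.le]
          norm_num
      _ ≤ (ε : ℝ≥0∞) := by
          rw [hη, mul_div_cancel₀ _ hβ0.ne']
          simp

/-- Positive Hausdorff content from nonvanishing Hausdorff measure. -/
lemma content_pos (d : ℝ) (hd : 0 < d) (S : Set ℝ) (h0 : μH[d] S ≠ 0) :
    ∃ c : ℝ≥0∞, 0 < c ∧ ∀ t : ℕ → Set ℝ, S ⊆ ⋃ n, t n →
      c ≤ ∑' n, EMetric.diam (t n) ^ d := by
  by_contra hcon
  push_neg at hcon
  apply h0
  have key : ∀ ε : ℝ≥0∞, 0 < ε → μH[d] S ≤ ε := by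
    intro ε hε
    rw [Measure.hausdorffMeasure_apply]
    refine iSup₂_le fun r hr => ?_
    set c : ℝ≥0∞ := min ε (min 1 (r ^ d)) with hc
    have hcpos : 0 < c := by
      refine lt_min hε (lt_min zero_lt_one ?_)
      exact ENNReal.rpow_pos_of_nonneg hr hd.le
    obtain ⟨t, htS, htsum⟩ := hcon c hcpos
    have hdiam : ∀ n, EMetric.diam (t n) ≤ r := by
      intro n
      by_contra hgt
      push_neg at hgt
      have h1 : r ^ d ≤ EMetric.diam (t n) ^ d :=
        ENNReal.rpow_le_rpow hgt.le hd.le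
      have h2 : EMetric.diam (t n) ^ d ≤ ∑' n, EMetric.diam (t n) ^ d :=
        ENNReal.le_tsum n
      have : r ^ d < c := lt_of_le_of_lt (h1.trans h2) htsum
      exact absurd this (not_lt.2 ((min_le_right _ _).trans (min_le_right _ _)))
    refine iInf₂_le_of_le t htS ?_
    refine iInf_le_of_le hdiam ?_
    calc (∑' n, ⨆ _ : (t n).Nonempty, EMetric.diam (t n) ^ d)
        ≤ ∑' n, EMetric.diam (t n) ^ d :=
          ENNReal.tsum_le_tsum fun n => iSup_le fun _ => le_rfl
      _ ≤ ε := (htsum.le.trans (min_le_left _ _))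
  have := key
  refine le_antisymm ?_ zero_le
  refine ENNReal.le_of_forall_pos_le_add fun ε hε _ => ?_
  simpa using key ε (by exact_mod_cast hε)

/-- Core lower bound. -/
lemma lower_core (a b : ℝ) (hab : a < b) (d : ℝ) (hd : 0 < d) (S : Set ℝ)
    (hS : μH[d] S ≠ 0) : μH[d + 1] (Icc a b ×ˢ S) ≠ 0 := by
  obtain ⟨c, hc, hcon⟩ := content_pos d hd S hS
  have main : c * ENNReal.ofReal (b - a) ≤ μH[d + 1] (Icc a b ×ˢ S) := by
    rw [Measure.hausdorffMeasure_apply]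
    refine le_trans ?_ (le_iSup₂ (1 : ℝ≥0∞) zero_lt_one)
    refine le_iInf fun V => le_iInf fun hV => le_iInf fun hVd => ?_
    classical
    -- notation
    set w : ℕ → ℝ≥0∞ := fun i => EMetric.diam (V i) ^ d with hw
    set A' : ℕ → Set ℝ := fun i => toMeasurable volume (Prod.fst '' V i ∩ Icc a b) with hA'
    have hslice : ∀ x ∈ Icc a b,
        c ≤ ∑' i, Set.indicator (A' i) (fun _ => w i) x := by
      intro x hx
      have hcover : S ⊆ ⋃ i, (if x ∈ Prod.fst '' V i then Prod.snd '' V i else ∅) := by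
        intro y hy
        obtain ⟨i, hi⟩ := mem_iUnion.1 (hV (Set.mk_mem_prod hx hy))
        refine mem_iUnion.2 ⟨i, ?_⟩
        rw [if_pos ⟨(x, y), hi, rfl⟩]
        exact ⟨(x, y), hi, rfl⟩
      refine (hcon _ hcover).trans (ENNReal.tsum_le_tsum fun i => ?_)
      by_cases hxi : x ∈ Prod.fst '' V i
      · rw [if_pos hxi]
        have hxA : x ∈ A' i := subset_toMeasurable _ _ ⟨hxi, hx⟩
        rw [Set.indicator_of_mem hxA]
        refine ENNReal.rpow_le_rpow ?_ hd.le
        simpa [EMetric.diam] using (LipschitzWith.prod_snd).ediam_image_le (V i)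
      · rw [if_neg hxi]
        simp [EMetric.diam_empty, EMetric.diam, ENNReal.zero_rpow_of_pos hd]
    have hmeas : ∀ i, MeasurableSet (A' i) := fun i => measurableSet_toMeasurable _ _
    have step1 : c * ENNReal.ofReal (b - a)
        = ∫⁻ x, Set.indicator (Icc a b) (fun _ => c) x := by
      rw [lintegral_indicator_const measurableSet_Icc, Real.volume_Icc, mul_comm]
    have step2 : (∫⁻ x, Set.indicator (Icc a b) (fun _ => c) x)
        ≤ ∫⁻ x, ∑' i, Set.indicator (A' i) (fun _ => w i) x := by
      refine lintegral_mono fun x => ?_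
      by_cases hx : x ∈ Icc a b
      · rw [Set.indicator_of_mem hx]; exact hslice x hx
      · rw [Set.indicator_of_notMem hx]; exact zero_le
    have step3 : (∫⁻ x, ∑' i, Set.indicator (A' i) (fun _ => w i) x)
        = ∑' i, w i * volume (A' i) := by
      rw [lintegral_tsum fun i => (measurable_const.indicator (hmeas i)).aemeasurable]
      congr 1
      ext i
      rw [lintegral_indicator_const (hmeas i)]
    have step4 : ∀ i, volume (A' i) ≤ EMetric.diam (V i) := by
      intro i
      rw [measure_toMeasurable]
      refine (Real.volume_le_diam _).trans ?_
      refine le_trans (EMetric.diam_mono inter_subset_left) ?_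
      simpa [EMetric.diam] using (LipschitzWith.prod_fst).ediam_image_le (V i)
    have step5 : (∑' i, w i * volume (A' i)) ≤ ∑' i, EMetric.diam (V i) ^ (d + 1) := by
      refine ENNReal.tsum_le_tsum fun i => ?_
      rcases eq_or_ne (EMetric.diam (V i)) 0 with h0 | h0
      · simp [hw, h0, ENNReal.zero_rpow_of_pos hd,
          ENNReal.zero_rpow_of_pos (by linarith : (0:ℝ) < d + 1)]
      · have htop : EMetric.diam (V i) ≠ ∞ := by
          refine ne_top_of_le_ne_top ?_ (hVd i)
          exact ENNReal.one_ne_top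
        calc w i * volume (A' i) ≤ EMetric.diam (V i) ^ d * EMetric.diam (V i) ^ (1:ℝ) := by
              rw [ENNReal.rpow_one]; exact mul_le_mul_right (step4 i) _
          _ = EMetric.diam (V i) ^ (d + 1) := by
              rw [← ENNReal.rpow_add d 1 h0 htop]
    have step6 : (∑' i, EMetric.diam (V i) ^ (d + 1))
        ≤ ∑' i, ⨆ _ : (V i).Nonempty, EMetric.diam (V i) ^ (d + 1) := by
      refine ENNReal.tsum_le_tsum fun i => ?_
      rcases eq_empty_or_nonempty (V i) with he | hne
      · simp [he, EMetric.diam, ENNReal.zero_rpow_of_pos (by linarith : (0:ℝ) < d + 1)]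
      · rw [iSup_pos hne]
    calc c * ENNReal.ofReal (b - a) = _ := step1
      _ ≤ _ := step2
      _ = _ := step3
      _ ≤ _ := step5
      _ ≤ _ := step6
  intro h0
  rw [h0] at main
  have hba : ENNReal.ofReal (b - a) ≠ 0 := by
    simp only [ne_eq, ENNReal.ofReal_eq_zero, not_le]
    linarith
  exact (mul_ne_zero hc.ne' hba) (le_antisymm main zero_le)

lemma dimH_Icc_prod_le (a b : ℝ) (hab : a ≤ b) (S : Set ℝ) :
    dimH (Icc a b ×ˢ S) ≤ 1 + dimH S := by
  rcases eq_or_ne (dimH S) ∞ with htop | htop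
  · rw [htop]; simp
  refine ENNReal.le_of_forall_pos_le_add fun ε hε _ => ?_
  have hlt : dimH S < dimH S + ε := by
    refine ENNReal.lt_add_right htop ?_
    exact_mod_cast hε.ne'
  obtain ⟨d, hd1, hd2⟩ := ENNReal.lt_iff_exists_nnreal_btwn.1 hlt
  have hd0 : (0:ℝ) < (d:ℝ) := by
    have : (0:ℝ≥0∞) < (d:ℝ≥0∞) := lt_of_le_of_lt zero_le hd1
    exact_mod_cast this
  have hμ : μH[(d:ℝ)] S = 0 := hausdorffMeasure_of_dimH_lt hd1
  have h0 := upper_core a b hab (d:ℝ) hd0 S hμ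
  have hle : dimH (Icc a b ×ˢ S) ≤ ((d + 1 : ℝ≥0) : ℝ≥0∞) := by
    refine dimH_le_of_hausdorffMeasure_ne_top ?_
    have : ((d + 1 : ℝ≥0) : ℝ) = (d:ℝ) + 1 := by push_cast; ring
    rw [this, h0]
    exact ENNReal.zero_ne_top
  refine hle.trans ?_
  rw [ENNReal.coe_add]
  calc (d:ℝ≥0∞) + 1 ≤ (dimH S + ε) + 1 := add_le_add_left hd2.le _
    _ = 1 + dimH S + ε := by ring

lemma isometry_section (t₀ : ℝ) : Isometry (fun x : ℝ => (x, t₀)) := by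
  intro x y
  rw [Prod.edist_eq]
  simp

lemma le_dimH_Icc_prod (a b : ℝ) (hab : a < b) (S : Set ℝ) (hS : S.Nonempty) :
    1 + dimH S ≤ dimH (Icc a b ×ˢ S) := by
  obtain ⟨t₀, ht₀⟩ := hS
  have hone : (1:ℝ≥0∞) ≤ dimH (Icc a b ×ˢ S) := by
    have hsub : (fun x : ℝ => (x, t₀)) '' Icc a b ⊆ Icc a b ×ˢ S := by
      rintro _ ⟨x, hx, rfl⟩; exact ⟨hx, ht₀⟩
    have h1 : dimH ((fun x : ℝ => (x, t₀)) '' Icc a b) = dimH (Icc a b) :=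
      (isometry_section t₀).dimH_image _
    have h2 : dimH (Icc a b : Set ℝ) = 1 := by
      have := Real.dimH_of_mem_nhds (Icc_mem_nhds (show a < (a+b)/2 by linarith)
        (show (a+b)/2 < b by linarith))
      simpa using this
    calc (1:ℝ≥0∞) = dimH ((fun x : ℝ => (x, t₀)) '' Icc a b) := by rw [h1, h2]
      _ ≤ _ := dimH_mono hsub
  refine ENNReal.le_of_forall_nnreal_lt fun r hr => ?_
  rcases le_or_gt (r : ℝ≥0∞) 1 with hr1 | hr1
  · exact hr1.trans hone
  have hr1' : (1:ℝ≥0) < r := by exact_mod_cast hr1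
  set d : ℝ≥0 := r - 1 with hd
  have hrd : (r : ℝ≥0∞) = 1 + (d : ℝ≥0∞) := by
    rw [hd]
    push_cast [ENNReal.coe_sub]
    rw [add_comm]
    rw [tsub_add_cancel_of_le (le_of_lt (by exact_mod_cast hr1'))]
  have hdS : (d : ℝ≥0∞) < dimH S := by
    rw [hrd] at hr
    exact (ENNReal.add_lt_add_iff_left ENNReal.one_ne_top).1 hr
  have hd0 : (0:ℝ) < (d:ℝ) := by
    have : (0:ℝ≥0) < d := tsub_pos_of_lt hr1'
    exact_mod_cast this
  have hμ : μH[(d:ℝ)] S = ∞ := hausdorffMeasure_of_lt_dimH hdS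
  have hne : μH[(d:ℝ) + 1] (Icc a b ×ˢ S) ≠ 0 :=
    lower_core a b hab (d:ℝ) hd0 S (by rw [hμ]; exact ENNReal.top_ne_zero)
  have : ((d + 1 : ℝ≥0) : ℝ≥0∞) ≤ dimH (Icc a b ×ˢ S) := by
    refine le_dimH_of_hausdorffMeasure_ne_zero ?_
    have hcast : ((d + 1 : ℝ≥0) : ℝ) = (d:ℝ) + 1 := by push_cast; ring
    rw [hcast]
    exact hne
  refine le_trans (le_of_eq ?_) this
  rw [hrd, ENNReal.coe_add, add_comm]
  norm_num

lemma dimH_univ_prod (S : Set ℝ) (hS : S.Nonempty) :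
    dimH ((univ : Set ℝ) ×ˢ S) = 1 + dimH S := by
  refine le_antisymm ?_ ?_
  · have hcover : (univ : Set ℝ) ×ˢ S = ⋃ n : ℕ, Icc (-(n:ℝ)) n ×ˢ S := by
      ext ⟨x, y⟩
      simp only [mem_prod, mem_univ, true_and, mem_iUnion, mem_Icc]
      constructor
      · intro hy
        obtain ⟨n, hn⟩ := exists_nat_ge |x|
        exact ⟨n, ⟨by (cases abs_le.1 hn); linarith, (abs_le.1 hn).2⟩, hy⟩
      · rintro ⟨n, _, hy⟩; exact hy
    rw [hcover, dimH_iUnion]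
    exact iSup_le fun n => dimH_Icc_prod_le (-(n:ℝ)) n (neg_le_self n.cast_nonneg) S
  · refine le_trans (le_dimH_Icc_prod 0 1 one_pos S hS) (dimH_mono ?_)
    exact prod_mono_left (subset_univ _)


def ι2 : SL2 → (Fin 2 → Fin 2 → ℝ) := fun x => Matrix.of.symm (x : Matrix (Fin 2) (Fin 2) ℝ)

lemma isometry_ι2 : Isometry ι2 := Isometry.of_dist_eq fun _ _ => rfl

def phi (g : SL2) (p : ℝ × ℝ) : Fin 2 → Fin 2 → ℝ :=
  ![![Real.exp (p.2/2) * (g : Matrix (Fin 2) (Fin 2) ℝ) 0 0,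
     Real.exp (p.2/2) * (g : Matrix (Fin 2) (Fin 2) ℝ) 0 1],
    ![p.1 * Real.exp (p.2/2) * (g : Matrix (Fin 2) (Fin 2) ℝ) 0 0
        + Real.exp (-(p.2/2)) * (g : Matrix (Fin 2) (Fin 2) ℝ) 1 0,
      p.1 * Real.exp (p.2/2) * (g : Matrix (Fin 2) (Fin 2) ℝ) 0 1
        + Real.exp (-(p.2/2)) * (g : Matrix (Fin 2) (Fin 2) ℝ) 1 1]]

lemma coe_Phi (g : SL2) (p : ℝ × ℝ) :
    ((nMat p.1 * aMat p.2 * g : SL2) : Matrix (Fin 2) (Fin 2) ℝ) = Matrix.of (phi g p) := by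
  rw [Matrix.SpecialLinearGroup.coe_mul, Matrix.SpecialLinearGroup.coe_mul]
  ext i j
  fin_cases i <;> fin_cases j <;>
    simp [phi, nMat, aMat, Matrix.mul_apply, Fin.sum_univ_two] <;> ring

lemma contDiff_phi (g : SL2) : ContDiff ℝ 1 (phi g) := by
  refine contDiff_pi.2 fun i => contDiff_pi.2 fun j => ?_
  fin_cases i <;> fin_cases j <;>
    · simp only [phi]
      norm_num [Matrix.cons_val_zero, Matrix.cons_val_one, Matrix.head_cons]
      fun_prop (disch := norm_num)

def n00 (g : SL2) (M : Fin 2 → Fin 2 → ℝ) : ℝ :=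
  M 0 0 * ((g⁻¹ : SL2) : Matrix (Fin 2) (Fin 2) ℝ) 0 0
    + M 0 1 * ((g⁻¹ : SL2) : Matrix (Fin 2) (Fin 2) ℝ) 1 0

def n10 (g : SL2) (M : Fin 2 → Fin 2 → ℝ) : ℝ :=
  M 1 0 * ((g⁻¹ : SL2) : Matrix (Fin 2) (Fin 2) ℝ) 0 0
    + M 1 1 * ((g⁻¹ : SL2) : Matrix (Fin 2) (Fin 2) ℝ) 1 0

def psi (g : SL2) (M : Fin 2 → Fin 2 → ℝ) : ℝ × ℝ :=
  (n10 g M / n00 g M, 2 * Real.log (n00 g M))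

lemma entries_inv (g : SL2) :
    ((g : Matrix (Fin 2) (Fin 2) ℝ) 0 0 * ((g⁻¹ : SL2) : Matrix (Fin 2) (Fin 2) ℝ) 0 0
      + (g : Matrix (Fin 2) (Fin 2) ℝ) 0 1 * ((g⁻¹ : SL2) : Matrix (Fin 2) (Fin 2) ℝ) 1 0 = 1)
    ∧ ((g : Matrix (Fin 2) (Fin 2) ℝ) 1 0 * ((g⁻¹ : SL2) : Matrix (Fin 2) (Fin 2) ℝ) 0 0
      + (g : Matrix (Fin 2) (Fin 2) ℝ) 1 1 * ((g⁻¹ : SL2) : Matrix (Fin 2) (Fin 2) ℝ) 1 0 = 0) := by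
  have hggi : ((g : Matrix (Fin 2) (Fin 2) ℝ) * ((g⁻¹ : SL2) : Matrix (Fin 2) (Fin 2) ℝ)) = 1 := by
    rw [← Matrix.SpecialLinearGroup.coe_mul, mul_inv_cancel, Matrix.SpecialLinearGroup.coe_one]
  constructor
  · have := congrFun (congrFun hggi 0) 0
    simpa [Matrix.mul_apply, Fin.sum_univ_two] using this
  · have := congrFun (congrFun hggi 1) 0
    simpa [Matrix.mul_apply, Fin.sum_univ_two] using this

lemma n00_phi (g : SL2) (p : ℝ × ℝ) : n00 g (phi g p) = Real.exp (p.2/2) := by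
  obtain ⟨e00, e10⟩ := entries_inv g
  simp only [n00, phi, Matrix.cons_val_zero, Matrix.cons_val_one, Matrix.head_cons]
  linear_combination Real.exp (p.2/2) * e00

lemma n10_phi (g : SL2) (p : ℝ × ℝ) : n10 g (phi g p) = p.1 * Real.exp (p.2/2) := by
  obtain ⟨e00, e10⟩ := entries_inv g
  simp only [n10, phi, Matrix.cons_val_zero, Matrix.cons_val_one, Matrix.head_cons]
  linear_combination p.1 * Real.exp (p.2/2) * e00 + Real.exp (-(p.2/2)) * e10

lemma psi_phi (g : SL2) (p : ℝ × ℝ) : psi g (phi g p) = p := by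
  have h := Real.exp_ne_zero (p.2/2)
  rw [psi, n00_phi, n10_phi]
  ext
  · simp only
    field_simp
  · simp only [Real.log_exp]
    ring

lemma main_eq (g : SL2) (X : Set (ℝ × ℝ)) :
    dimH ((fun p : ℝ × ℝ => nMat p.1 * aMat p.2 * g) '' X) = dimH X := by
  have himg : ι2 '' ((fun p : ℝ × ℝ => nMat p.1 * aMat p.2 * g) '' X) = phi g '' X := by
    rw [Set.image_image]
    refine Set.image_congr fun p _ => ?_
    show Matrix.of.symm _ = _
    rw [coe_Phi]
    rfl
  have key : dimH ((fun p : ℝ × ℝ => nMat p.1 * aMat p.2 * g) '' X) = dimH (phi g '' X) := by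
    rw [← himg, isometry_ι2.dimH_image]
  rw [key]
  refine le_antisymm ?_ ?_
  · refine dimH_image_le_of_locally_lipschitzOn fun p _ => ?_
    obtain ⟨K, t, ht, hlip⟩ := ((contDiff_phi g).contDiffAt (x := p)).exists_lipschitzOnWith
    exact ⟨K, t, mem_nhdsWithin_of_mem_nhds ht, hlip⟩
  · have hXeq : psi g '' (phi g '' X) = X := by
      rw [Set.image_image]
      calc (fun p => psi g (phi g p)) '' X = id '' X := Set.image_congr fun p _ => psi_phi g p
        _ = X := Set.image_id X
    calc dimH X = dimH (psi g '' (phi g '' X)) := by rw [hXeq]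
      _ ≤ dimH (phi g '' X) := by
        refine dimH_image_le_of_locally_lipschitzOn fun M hM => ?_
        have hM0 : 0 < n00 g M := by
          obtain ⟨p, _, rfl⟩ := hM
          rw [n00_phi]
          positivity
        have h00 : ContDiff ℝ 1 (n00 g) := by unfold n00; fun_prop
        have h10 : ContDiff ℝ 1 (n10 g) := by unfold n10; fun_prop
        have hcd : ContDiffAt ℝ 1 (psi g) M := by
          refine ContDiffAt.prodMk ?_ ?_
          · exact (h10.contDiffAt).div (h00.contDiffAt) hM0.ne'
          · exact contDiffAt_const.mul ((Real.contDiffAt_log.2 hM0.ne').comp M h00.contDiffAt)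
        obtain ⟨K, t, ht, hlip⟩ := hcd.exists_lipschitzOnWith
        exact ⟨K, t, mem_nhdsWithin_of_mem_nhds ht, hlip⟩


end Auxiliary

/-- The Hausdorff dimension of the `N`-saturated set over an `A`-slice `S` based at `g`
equals `1 + dimH S`. -/
theorem dimH_N_saturated_A_slice (S : Set ℝ) (hS : S.Nonempty) (g : SL2) :
    dimH {x : SL2 | ∃ s : ℝ, ∃ t ∈ S, x = nMat s * aMat t * g} = 1 + dimH S := by
  have hset : {x : SL2 | ∃ s : ℝ, ∃ t ∈ S, x = nMat s * aMat t * g}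
      = (fun p : ℝ × ℝ => nMat p.1 * aMat p.2 * g) '' ((Set.univ : Set ℝ) ×ˢ S) := by
    ext x
    constructor
    · rintro ⟨s, t, ht, rfl⟩
      exact ⟨(s, t), ⟨trivial, ht⟩, rfl⟩
    · rintro ⟨⟨s, t⟩, ⟨-, ht⟩, rfl⟩
      exact ⟨s, t, ht, rfl⟩
  rw [hset, main_eq, dimH_univ_prod S hS]
end
end
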